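/- arXiv:2103.06350 — 5 statements merged into one kernel-verified Lean document; each statement's English description precedes it below -/
import Mathlib

section
/- Let H be a graph on k ≥ 2 vertices and let L be a real number such that I(H,n) ≥ L·C(n,k) for all n ≥ k. Then for every ε > 0 there exists n₀ such that for all n ≥ n₀, every graph G on n vertices with I(H,G) = I(H,n), and every vertex v of G, the number of k-element vertex subsets S of G with v ∈ S and G[S] isomorphic to H is at least (L − ε)·C(n, k−1). -/
open SimpleGraph

/-- Number of vertex subsets of `G` whose induced subgraph is isomorphic to `H`. -/
noncomputable def inducedCount {α β : Type*} [Fintype α] [Fintype β]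
    (H : SimpleGraph α) (G : SimpleGraph β) : ℕ :=
  Set.ncard {S : Finset β | Nonempty (H ≃g (G.induce (S : Set β)))}

/-- Maximum of `inducedCount H G` over all graphs `G` on `n` vertices. -/
noncomputable def maxCount {α : Type*} [Fintype α] (H : SimpleGraph α) (n : ℕ) : ℕ :=
  sSup {m | ∃ G : SimpleGraph (Fin n), inducedCount H G = m}

/-- The net graph: a triangle on `{3,4,5}` with pendant vertices `0,1,2`
attached to `3,4,5` respectively (0-indexed version of vertices 1..6). -/
def netGraph : SimpleGraph (Fin 6) :=
  SimpleGraph.fromRel (fun a b =>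
    (a = 3 ∧ b = 4) ∨ (a = 4 ∧ b = 5) ∨ (a = 3 ∧ b = 5) ∨
    (a = 0 ∧ b = 3) ∨ (a = 1 ∧ b = 4) ∨ (a = 2 ∧ b = 5))

/-- `N(n)`: the maximum number of induced copies of the net among graphs on `n` vertices. -/
noncomputable def netMax (n : ℕ) : ℕ := maxCount netGraph n

lemma aux_ncard_setOf {α : Type*} [Fintype α] (p : α → Prop) [DecidablePred p] :
    Set.ncard {x | p x} = (Finset.univ.filter (fun x => p x)).card := by
  rw [← Set.ncard_coe_finset]; congr 1; ext x; simp

lemma aux_ncard_split {α : Type*} [Finite α] (p q : α → Prop) :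
    Set.ncard {x | p x} = Set.ncard {x | q x ∧ p x} + Set.ncard {x | ¬ q x ∧ p x} := by
  rw [← Set.ncard_union_eq ?disj (Set.toFinite _) (Set.toFinite _)]
  case disj =>
    rw [Set.disjoint_left]; rintro x ⟨hq, -⟩ ⟨hq', -⟩; exact hq' hq
  congr 1; ext x
  by_cases h : q x <;> simp [h]

lemma aux_card_of_iso {k n : ℕ} (H : SimpleGraph (Fin k)) (G : SimpleGraph (Fin n))
    (S : Finset (Fin n)) (h : Nonempty (H ≃g (G.induce (S : Set (Fin n))))) : S.card = k := by
  obtain ⟨e⟩ := h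
  have := Fintype.card_congr e.toEquiv
  simpa using this.symm

lemma aux_le_maxCount {k n : ℕ} (H : SimpleGraph (Fin k)) (G : SimpleGraph (Fin n)) :
    inducedCount H G ≤ maxCount H n := by
  apply le_csSup
  · refine ⟨Nat.card (Finset (Fin n)), ?_⟩
    rintro m ⟨G', rfl⟩
    rw [inducedCount, ← Set.ncard_univ]
    exact Set.ncard_le_ncard (Set.subset_univ _) Set.finite_univ
  · exact ⟨G, rfl⟩

lemma aux_maxCount_le {k n : ℕ} (H : SimpleGraph (Fin k)) :
    maxCount H n ≤ n.choose k := by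
  apply csSup_le
  · exact ⟨inducedCount H ⊥, ⟨⊥, rfl⟩⟩
  rintro m ⟨G, rfl⟩
  classical
  rw [inducedCount, aux_ncard_setOf]
  have hpc : n.choose k = (Finset.univ.powersetCard k : Finset (Finset (Fin n))).card := by simp
  rw [hpc]
  apply Finset.card_le_card
  intro S hS
  simp only [Finset.mem_filter, Finset.mem_powersetCard] at *
  exact ⟨Finset.subset_univ _, aux_card_of_iso H G S hS.2⟩

lemma aux_sum_cnt {n k : ℕ} (p : Finset (Fin n) → Prop) [DecidablePred p]
    (hp : ∀ S, p S → S.card = k) :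
    ∑ v : Fin n, (Finset.univ.filter (fun S => v ∈ S ∧ p S)).card
      = k * (Finset.univ.filter p).card := by
  have h1 : ∀ v : Fin n, (Finset.univ.filter (fun S => v ∈ S ∧ p S)).card
      = ∑ S ∈ Finset.univ.filter p, if v ∈ S then 1 else 0 := by
    intro v
    rw [← Finset.card_filter, Finset.filter_filter]
    congr 1
    apply Finset.filter_congr
    intro S _
    exact and_comm
  simp_rw [h1]
  rw [Finset.sum_comm]
  have h2 : ∀ S ∈ Finset.univ.filter p, (∑ v : Fin n, if v ∈ S then 1 else 0) = k := by
    intro S hS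
    rw [Finset.sum_ite_mem, Finset.univ_inter, Finset.sum_const, smul_eq_mul, mul_one]
    exact hp S (Finset.mem_filter.mp hS).2
  rw [Finset.sum_congr rfl h2, Finset.sum_const, smul_eq_mul, mul_comm]

/-- The graph obtained from `G` by replacing `v` with a clone of `u`. -/
def cloneG {n : ℕ} (G : SimpleGraph (Fin n)) (u v : Fin n) : SimpleGraph (Fin n) :=
  G.comap (fun a => if a = v then u else a)

lemma aux_clone_induce_eq {n : ℕ} (G : SimpleGraph (Fin n)) (u v : Fin n)
    (S : Finset (Fin n)) (hv : v ∉ S) :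
    (cloneG G u v).induce (S : Set (Fin n)) = G.induce (S : Set (Fin n)) := by
  ext a b
  have ha : (a : Fin n) ≠ v := fun h => hv (h ▸ a.2)
  have hb : (b : Fin n) ≠ v := fun h => hv (h ▸ b.2)
  simp only [comap_adj, Function.Embedding.coe_subtype, cloneG]
  rw [if_neg ha, if_neg hb]

lemma aux_clone_iso {k n : ℕ} (H : SimpleGraph (Fin k)) (G : SimpleGraph (Fin n))
    (u v : Fin n) (huv : u ≠ v) (S : Finset (Fin n)) (hu : u ∈ S) (hv : v ∉ S)
    (e : H ≃g G.induce (S : Set (Fin n))) :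
    Nonempty (H ≃g (cloneG G u v).induce
      ((insert v (S.erase u) : Finset (Fin n)) : Set (Fin n))) := by
  have hmem : ∀ x : Fin n, x ∈ (S : Set (Fin n)) ↔
      Equiv.swap u v x ∈ ((insert v (S.erase u) : Finset (Fin n)) : Set (Fin n)) := by
    intro x
    simp only [Finset.coe_insert, Set.mem_insert_iff, Finset.mem_coe, Finset.mem_insert,
      Finset.mem_erase]
    rcases eq_or_ne x u with rfl | hxu
    · simp [Equiv.swap_apply_left, hu]
    rcases eq_or_ne x v with rfl | hxv
    · rw [Equiv.swap_apply_right]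
      simp [huv, hv]
    · rw [Equiv.swap_apply_of_ne_of_ne hxu hxv]
      simp [hxv, hxu]
  have hf : ∀ x : Fin n, x ∈ S →
      (if Equiv.swap u v x = v then u else Equiv.swap u v x) = x := by
    intro x hx
    rcases eq_or_ne x u with rfl | hxu
    · simp [Equiv.swap_apply_left]
    · have hxv : x ≠ v := fun h => hv (h ▸ hx)
      rw [Equiv.swap_apply_of_ne_of_ne hxu hxv, if_neg hxv]
  refine ⟨e.trans ⟨Equiv.subtypeEquiv (Equiv.swap u v) hmem, ?_⟩⟩
  intro a b
  simp only [Equiv.subtypeEquiv_apply, comap_adj, Function.Embedding.coe_subtype, cloneG]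
  rw [hf a a.2, hf b b.2]

section SpecLemmas

variable {k n : ℕ} (H : SimpleGraph (Fin k)) (G : SimpleGraph (Fin n)) (u v : Fin n)

lemma spec_split_v :
    inducedCount H G
      = Set.ncard {S : Finset (Fin n) | v ∈ S ∧ Nonempty (H ≃g (G.induce (S : Set (Fin n))))}
        + Set.ncard {S : Finset (Fin n) | v ∉ S ∧ Nonempty (H ≃g (G.induce (S : Set (Fin n))))} := by
  have h := aux_ncard_split (fun S : Finset (Fin n) => Nonempty (H ≃g (G.induce (S : Set (Fin n)))))
    (fun S => v ∈ S)
  rw [inducedCount]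
  simpa using h

lemma spec_split_uv :
    Set.ncard {S : Finset (Fin n) | u ∈ S ∧ Nonempty (H ≃g (G.induce (S : Set (Fin n))))}
      = Set.ncard {S : Finset (Fin n) | v ∈ S ∧ u ∈ S ∧ Nonempty (H ≃g (G.induce (S : Set (Fin n))))}
        + Set.ncard {S : Finset (Fin n) | v ∉ S ∧ u ∈ S ∧ Nonempty (H ≃g (G.induce (S : Set (Fin n))))} := by
  have h := aux_ncard_split
    (fun S : Finset (Fin n) => u ∈ S ∧ Nonempty (H ≃g (G.induce (S : Set (Fin n)))))
    (fun S => v ∈ S)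
  simpa using h

lemma spec_pair_le (hk : 2 ≤ k) (huv : u ≠ v) :
    Set.ncard {S : Finset (Fin n) | v ∈ S ∧ u ∈ S ∧ Nonempty (H ≃g (G.induce (S : Set (Fin n))))}
      ≤ n.choose (k - 2) := by
  classical
  have hsub : Set.MapsTo (fun S : Finset (Fin n) => (S.erase u).erase v)
      {S : Finset (Fin n) | v ∈ S ∧ u ∈ S ∧ Nonempty (H ≃g (G.induce (S : Set (Fin n))))}
      {T : Finset (Fin n) | T.card = k - 2} := by
    rintro S ⟨hvS, huS, hpS⟩
    have hvS' : v ∈ S.erase u := Finset.mem_erase.mpr ⟨huv.symm, hvS⟩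
    have hc := aux_card_of_iso H G S hpS
    simp only [Set.mem_setOf_eq]
    rw [Finset.card_erase_of_mem hvS', Finset.card_erase_of_mem huS, hc]
    omega
  have hinj : Set.InjOn (fun S : Finset (Fin n) => (S.erase u).erase v)
      {S : Finset (Fin n) | v ∈ S ∧ u ∈ S ∧ Nonempty (H ≃g (G.induce (S : Set (Fin n))))} := by
    rintro S1 ⟨hv1, hu1, -⟩ S2 ⟨hv2, hu2, -⟩ h
    have r : ∀ (S : Finset (Fin n)), v ∈ S → u ∈ S →
        insert u (insert v ((S.erase u).erase v)) = S := by
      intro S hvS huS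
      rw [Finset.insert_erase (Finset.mem_erase.mpr ⟨huv.symm, hvS⟩), Finset.insert_erase huS]
    rw [← r S1 hv1 hu1, ← r S2 hv2 hu2]
    exact congrArg (fun T => insert u (insert v T)) h
  have hle := Set.ncard_le_ncard_of_injOn _ hsub hinj (Set.toFinite _)
  refine hle.trans ?_
  rw [aux_ncard_setOf]
  have hpc : (Finset.univ.filter (fun T : Finset (Fin n) => T.card = k - 2))
      = Finset.univ.powersetCard (k - 2) := by
    ext T
    simp [Finset.mem_powersetCard]
  rw [hpc, Finset.card_powersetCard, Finset.card_univ, Fintype.card_fin]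

lemma spec_clone_lower (huv : u ≠ v) :
    Set.ncard {S : Finset (Fin n) | v ∉ S ∧ u ∈ S ∧ Nonempty (H ≃g (G.induce (S : Set (Fin n))))}
      + Set.ncard {S : Finset (Fin n) | v ∉ S ∧ Nonempty (H ≃g (G.induce (S : Set (Fin n))))}
      ≤ inducedCount H (cloneG G u v) := by
  rw [spec_split_v H (cloneG G u v) v]
  have hB : {S : Finset (Fin n) | v ∉ S ∧ Nonempty (H ≃g ((cloneG G u v).induce (S : Set (Fin n))))}
      = {S : Finset (Fin n) | v ∉ S ∧ Nonempty (H ≃g (G.induce (S : Set (Fin n))))} := by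
    ext S
    simp only [Set.mem_setOf_eq, and_congr_right_iff]
    intro hvS
    rw [aux_clone_induce_eq G u v S hvS]
  rw [hB]
  have hT : Set.ncard {S : Finset (Fin n) | v ∉ S ∧ u ∈ S ∧ Nonempty (H ≃g (G.induce (S : Set (Fin n))))}
      ≤ Set.ncard {S : Finset (Fin n) | v ∈ S ∧ Nonempty (H ≃g ((cloneG G u v).induce (S : Set (Fin n))))} := by
    have hmaps : Set.MapsTo (fun S : Finset (Fin n) => insert v (S.erase u))
        {S : Finset (Fin n) | v ∉ S ∧ u ∈ S ∧ Nonempty (H ≃g (G.induce (S : Set (Fin n))))}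
        {S : Finset (Fin n) | v ∈ S ∧ Nonempty (H ≃g ((cloneG G u v).induce (S : Set (Fin n))))} := by
      rintro S ⟨hvS, huS, ⟨e⟩⟩
      exact ⟨Finset.mem_insert_self v _, aux_clone_iso H G u v huv S huS hvS e⟩
    have hinj : Set.InjOn (fun S : Finset (Fin n) => insert v (S.erase u))
        {S : Finset (Fin n) | v ∉ S ∧ u ∈ S ∧ Nonempty (H ≃g (G.induce (S : Set (Fin n))))} := by
      rintro S1 ⟨hv1, hu1, -⟩ S2 ⟨hv2, hu2, -⟩ h
      have r : ∀ (S : Finset (Fin n)), v ∉ S → u ∈ S →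
          insert u ((insert v (S.erase u)).erase v) = S := by
        intro S hvS huS
        rw [Finset.erase_insert (fun hmem => hvS (Finset.mem_of_mem_erase hmem)),
          Finset.insert_erase huS]
      rw [← r S1 hv1 hu1, ← r S2 hv2 hu2]
      exact congrArg (fun T => insert u (T.erase v)) h
    exact Set.ncard_le_ncard_of_injOn _ hmaps hinj (Set.toFinite _)
  omega

lemma spec_sum_cnt :
    k * inducedCount H G
      = ∑ w : Fin n, Set.ncard {S : Finset (Fin n) | w ∈ S ∧ Nonempty (H ≃g (G.induce (S : Set (Fin n))))} := by
  classical
  have h := aux_sum_cnt (fun S : Finset (Fin n) => Nonempty (H ≃g (G.induce (S : Set (Fin n)))))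
    (fun S hS => aux_card_of_iso H G S hS)
  rw [inducedCount, aux_ncard_setOf, ← h]
  apply Finset.sum_congr rfl
  intro w _
  exact (aux_ncard_setOf _).symm

end SpecLemmas
theorem extremal_vertex_count_lower_bound
    (k : ℕ) (hk : 2 ≤ k) (H : SimpleGraph (Fin k)) (L : ℝ)
    (hL : ∀ n : ℕ, k ≤ n → L * (n.choose k : ℝ) ≤ (maxCount H n : ℝ)) :
    ∀ ε : ℝ, 0 < ε → ∃ n₀ : ℕ, ∀ n : ℕ, n₀ ≤ n → ∀ G : SimpleGraph (Fin n),
      inducedCount H G = maxCount H n → ∀ v : Fin n,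
        (L - ε) * (n.choose (k - 1) : ℝ) ≤
          (Set.ncard {S : Finset (Fin n) |
            v ∈ S ∧ Nonempty (H ≃g (G.induce (S : Set (Fin n))))} : ℝ) := by
  classical
  obtain ⟨m, rfl⟩ : ∃ m, k = m + 2 := ⟨k - 2, by omega⟩
  intro ε hε
  refine ⟨(m + 3) + ⌈(2 * (m + 1) : ℝ) / ε⌉₊, ?_⟩
  intro n hn G hGmax v
  obtain ⟨N, rfl⟩ : ∃ N, n = N + 1 := ⟨n - 1, by omega⟩
  have hkn : m + 2 ≤ N + 1 := by omega
  -- trivial case L ≤ ε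
  rcases le_or_gt L ε with hLε | hLε
  · have h1 : (L - ε) * (((N + 1).choose (m + 2 - 1) : ℕ) : ℝ) ≤ 0 := by
      apply mul_nonpos_of_nonpos_of_nonneg
      · linarith
      · positivity
    exact h1.trans (by positivity)
  have hL0 : 0 < L := hε.trans hLε
  -- L ≤ 1
  have hL1 : L ≤ 1 := by
    have h1 := hL (N + 1) hkn
    have h2 : ((maxCount H (N + 1) : ℕ) : ℝ) ≤ (((N + 1).choose (m + 2) : ℕ) : ℝ) :=
      Nat.cast_le.mpr (aux_maxCount_le H)
    have h3 : (0:ℝ) < ((N + 1).choose (m + 2) : ℝ) :=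
      Nat.cast_pos.mpr (Nat.choose_pos hkn)
    nlinarith
  -- choose u with maximal count
  obtain ⟨u, -, humax⟩ := Finset.exists_max_image (Finset.univ : Finset (Fin (N + 1)))
    (fun w => Set.ncard {S : Finset (Fin (N + 1)) |
      w ∈ S ∧ Nonempty (H ≃g (G.induce (S : Set (Fin (N + 1)))))}) ⟨v, Finset.mem_univ v⟩
  -- (m+2) * I(G) ≤ (N+1) * cnt u
  have hmaxsum : (m + 2) * inducedCount H G
      ≤ (N + 1) * Set.ncard {S : Finset (Fin (N + 1)) |
          u ∈ S ∧ Nonempty (H ≃g (G.induce (S : Set (Fin (N + 1)))))} := by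
    rw [spec_sum_cnt H G]
    calc ∑ w : Fin (N + 1), Set.ncard {S : Finset (Fin (N + 1)) |
            w ∈ S ∧ Nonempty (H ≃g (G.induce (S : Set (Fin (N + 1)))))}
        ≤ ∑ _w : Fin (N + 1), Set.ncard {S : Finset (Fin (N + 1)) |
            u ∈ S ∧ Nonempty (H ≃g (G.induce (S : Set (Fin (N + 1)))))} :=
          Finset.sum_le_sum (fun w _ => humax w (Finset.mem_univ w))
      _ = _ := by rw [Finset.sum_const, Finset.card_univ, Fintype.card_fin, smul_eq_mul]
  -- choose identity
  have hchooseid : (N + 1) * (N.choose (m + 1)) = ((N + 1).choose (m + 2)) * (m + 2) := by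
    have h := Nat.add_one_mul_choose_eq N (m + 1)
    simpa [Nat.succ_eq_add_one] using h
  -- lower bound on cnt u
  have hcu : L * (N.choose (m + 1) : ℝ)
      ≤ (Set.ncard {S : Finset (Fin (N + 1)) |
          u ∈ S ∧ Nonempty (H ≃g (G.induce (S : Set (Fin (N + 1)))))} : ℝ) := by
    have h1 : L * (((N + 1).choose (m + 2) : ℕ) : ℝ) ≤ (inducedCount H G : ℝ) := by
      rw [hGmax]; exact hL (N + 1) hkn
    have h2 : ((m : ℝ) + 2) * (inducedCount H G : ℝ)
        ≤ ((N : ℝ) + 1) * (Set.ncard {S : Finset (Fin (N + 1)) |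
            u ∈ S ∧ Nonempty (H ≃g (G.induce (S : Set (Fin (N + 1)))))} : ℝ) := by
      exact_mod_cast hmaxsum
    have h3 : ((N : ℝ) + 1) * (N.choose (m + 1) : ℝ)
        = (((N + 1).choose (m + 2) : ℕ) : ℝ) * ((m : ℝ) + 2) := by
      exact_mod_cast hchooseid
    have hn0 : (0:ℝ) < (N : ℝ) + 1 := by positivity
    rw [← mul_le_mul_iff_right₀ hn0]
    calc ((N : ℝ) + 1) * (L * (N.choose (m + 1) : ℝ))
        = ((m : ℝ) + 2) * (L * (((N + 1).choose (m + 2) : ℕ) : ℝ)) := by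
          rw [mul_comm L, ← mul_assoc, h3]; ring
      _ ≤ ((m : ℝ) + 2) * (inducedCount H G : ℝ) := by
          apply mul_le_mul_of_nonneg_left h1 (by positivity)
      _ ≤ _ := h2
  -- key bound: cnt u - choose ≤ cnt v
  have hkey : (Set.ncard {S : Finset (Fin (N + 1)) |
        u ∈ S ∧ Nonempty (H ≃g (G.induce (S : Set (Fin (N + 1)))))} : ℝ)
      - ((N + 1).choose m : ℝ)
      ≤ (Set.ncard {S : Finset (Fin (N + 1)) |
          v ∈ S ∧ Nonempty (H ≃g (G.induce (S : Set (Fin (N + 1)))))} : ℝ) := by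
    rcases eq_or_ne u v with rfl | huv
    · have : (0:ℝ) ≤ ((N + 1).choose m : ℝ) := by positivity
      linarith
    have h1 := spec_split_v H G v
    have h3 := spec_clone_lower H G u v huv
    have h4 : inducedCount H (cloneG G u v) ≤ inducedCount H G := by
      rw [hGmax]; exact aux_le_maxCount H (cloneG G u v)
    have h5 := spec_split_uv H G u v
    have h6 := spec_pair_le H G u v (by omega) huv
    have h7 : m + 2 - 2 = m := rfl
    rw [h7] at h6
    have hnat : Set.ncard {S : Finset (Fin (N + 1)) |
          u ∈ S ∧ Nonempty (H ≃g (G.induce (S : Set (Fin (N + 1)))))}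
        ≤ Set.ncard {S : Finset (Fin (N + 1)) |
          v ∈ S ∧ Nonempty (H ≃g (G.induce (S : Set (Fin (N + 1)))))} + (N + 1).choose m := by
      omega
    have := (Nat.cast_le (α := ℝ)).mpr hnat
    push_cast at this
    linarith
  -- final numeric computation
  show (L - ε) * (((N + 1).choose (m + 1) : ℕ) : ℝ) ≤ _
  have hpascal : (((N + 1).choose (m + 1) : ℕ) : ℝ) = (N.choose m : ℝ) + (N.choose (m + 1) : ℝ) := by
    have h : (N + 1).choose (m + 1) = N.choose m + N.choose (m + 1) := Nat.choose_succ_succ N m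
    exact_mod_cast congrArg (Nat.cast (R := ℝ)) h
  have hmn : m ≤ N + 1 := by omega
  have hratio : (((N + 1).choose (m + 1) : ℕ) : ℝ) * ((m : ℝ) + 1)
      = (((N + 1).choose m : ℕ) : ℝ) * (((N : ℝ) + 1) - (m : ℝ)) := by
    have h := congrArg (Nat.cast (R := ℝ)) (Nat.choose_succ_right_eq (N + 1) m)
    push_cast at h
    rw [Nat.cast_sub hmn] at h
    push_cast at h
    linarith
  have hNm : (N.choose m : ℝ) ≤ ((N + 1).choose m : ℝ) :=
    Nat.cast_le.mpr (Nat.choose_le_choose m (by omega))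
  have hbig : 2 * ((m : ℝ) + 1) ≤ ε * (((N : ℝ) + 1) - (m : ℝ)) := by
    have hceil : (2 * ((m : ℝ) + 1)) / ε ≤ (⌈(2 * (m + 1) : ℝ) / ε⌉₊ : ℝ) := by
      exact_mod_cast Nat.le_ceil ((2 * ((m : ℝ) + 1)) / ε)
    have hnn : (⌈(2 * (m + 1) : ℝ) / ε⌉₊ : ℝ) ≤ ((N : ℝ) + 1) - (m : ℝ) := by
      have h1 : ⌈(2 * (m + 1) : ℝ) / ε⌉₊ + m ≤ N + 1 := by omega
      have h2 := (Nat.cast_le (α := ℝ)).mpr h1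
      push_cast at h2
      linarith
    have h2 : (2 * ((m : ℝ) + 1)) / ε ≤ ((N : ℝ) + 1) - (m : ℝ) := hceil.trans hnn
    calc 2 * ((m : ℝ) + 1) = ((2 * ((m : ℝ) + 1)) / ε) * ε := by field_simp
      _ ≤ (((N : ℝ) + 1) - (m : ℝ)) * ε := mul_le_mul_of_nonneg_right h2 hε.le
      _ = ε * (((N : ℝ) + 1) - (m : ℝ)) := by ring
  have hcm0 : (0:ℝ) ≤ (((N + 1).choose m : ℕ) : ℝ) := by positivity
  have hA0 : (0:ℝ) ≤ (((N + 1).choose (m + 1) : ℕ) : ℝ) := by positivity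
  have hB10 : (0:ℝ) ≤ (N.choose m : ℝ) := by positivity
  have e2 : 2 * (((N + 1).choose m : ℕ) : ℝ) ≤ ε * (((N + 1).choose (m + 1) : ℕ) : ℝ) := by
    have e1 : 2 * ((m : ℝ) + 1) * (((N + 1).choose m : ℕ) : ℝ)
        ≤ ε * ((((N + 1).choose (m + 1) : ℕ) : ℝ) * ((m : ℝ) + 1)) := by
      rw [hratio]
      calc 2 * ((m : ℝ) + 1) * (((N + 1).choose m : ℕ) : ℝ)
          ≤ (ε * (((N : ℝ) + 1) - (m : ℝ))) * (((N + 1).choose m : ℕ) : ℝ) :=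
            mul_le_mul_of_nonneg_right hbig hcm0
        _ = ε * ((((N + 1).choose m : ℕ) : ℝ) * (((N : ℝ) + 1) - (m : ℝ))) := by ring
    have hm1pos : (0:ℝ) < (m : ℝ) + 1 := by positivity
    nlinarith
  have e3 : L * (N.choose m : ℝ) ≤ (((N + 1).choose m : ℕ) : ℝ) := by
    calc L * (N.choose m : ℝ) ≤ 1 * (N.choose m : ℝ) :=
          mul_le_mul_of_nonneg_right hL1 hB10
      _ = (N.choose m : ℝ) := by ring
      _ ≤ (((N + 1).choose m : ℕ) : ℝ) := hNm
  have hfinal : (L - ε) * (((N + 1).choose (m + 1) : ℕ) : ℝ)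
      ≤ L * (N.choose (m + 1) : ℝ) - (((N + 1).choose m : ℕ) : ℝ) := by
    have := hpascal
    nlinarith
  linarith [hfinal, hcu, hkey]
end

section
/- Let H be a graph on k ≥ 2 vertices and let G be a graph on n ≥ k vertices with I(H,G) = I(H,n). For a vertex u of G, let H^u denote the number of k-element vertex subsets S of G with u ∈ S and G[S] isomorphic to H. Then for all vertices u, v of G, |H^u − H^v| ≤ C(n−2, k−2). -/
open SimpleGraph

namespace ExtremalAux
variable {k n : ℕ}

def clone (G : SimpleGraph (Fin n)) (u v : Fin n) : SimpleGraph (Fin n) where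
  Adj a b := a ≠ b ∧ G.Adj (if a = v then u else a) (if b = v then u else b)
  symm := ⟨by rintro a b ⟨h1, h2⟩; exact ⟨h1.symm, h2.symm⟩⟩
  loopless := ⟨by rintro a ⟨h1, _⟩; exact h1 rfl⟩

lemma clone_adj_of_ne (G : SimpleGraph (Fin n)) (u v : Fin n) {a b : Fin n}
    (ha : a ≠ v) (hb : b ≠ v) : (clone G u v).Adj a b ↔ G.Adj a b := by
  simp only [clone, ha, hb, if_neg]
  exact ⟨fun h => h.2, fun h => ⟨G.ne_of_adj h, h⟩⟩

lemma clone_adj_swap (G : SimpleGraph (Fin n)) (u v : Fin n) {a b : Fin n}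
    (ha : a ≠ v) (hb : b ≠ v) :
    (clone G u v).Adj (Equiv.swap u v a) (Equiv.swap u v b) ↔ G.Adj a b := by
  by_cases hau : a = u <;> by_cases hbu : b = u
  · subst hau; subst hbu; simp [clone, Equiv.swap_apply_left]
  · subst hau
    rw [Equiv.swap_apply_left, Equiv.swap_apply_of_ne_of_ne hbu hb]
    simp only [clone, if_pos rfl, if_neg hb]
    exact ⟨fun h => h.2, fun h => ⟨fun hvb => hb hvb.symm, h⟩⟩
  · subst hbu
    rw [Equiv.swap_apply_left, Equiv.swap_apply_of_ne_of_ne hau ha]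
    simp only [clone, if_pos rfl, if_neg ha]
    exact ⟨fun h => h.2, fun h => ⟨ha, h⟩⟩
  · rw [Equiv.swap_apply_of_ne_of_ne hau ha, Equiv.swap_apply_of_ne_of_ne hbu hb]
    exact clone_adj_of_ne G u v ha hb

/-- If `v ∉ S`, the induced subgraphs of `G` and of the clone on `S` are isomorphic. -/
noncomputable def isoAvoid (G : SimpleGraph (Fin n)) (u v : Fin n) (S : Finset (Fin n))
    (hv : v ∉ S) : G.induce (S : Set (Fin n)) ≃g (clone G u v).induce (S : Set (Fin n)) where
  toEquiv := Equiv.refl _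
  map_rel_iff' := by
    intro a b
    simp only [Equiv.refl_apply, comap_adj, Function.Embedding.coe_subtype]
    exact clone_adj_of_ne G u v (fun h => hv (h ▸ a.2)) (fun h => hv (h ▸ b.2))

/-- If `v ∉ S`, swapping `u,v` maps `G[S]` isomorphically to `clone[σ S]`. -/
noncomputable def isoSwap (G : SimpleGraph (Fin n)) (u v : Fin n) (S : Finset (Fin n))
    (hv : v ∉ S) :
    G.induce (S : Set (Fin n)) ≃g
      (clone G u v).induce ((S.image (Equiv.swap u v) : Finset (Fin n)) : Set (Fin n)) where
  toEquiv := (Equiv.swap u v).subtypeEquiv (by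
    intro a
    simp [Finset.mem_image, (Equiv.swap u v).injective.eq_iff])
  map_rel_iff' := by
    intro a b
    simp only [Equiv.subtypeEquiv_apply, comap_adj, Function.Embedding.coe_subtype]
    exact clone_adj_swap G u v (fun h => hv (h ▸ a.2)) (fun h => hv (h ▸ b.2))

lemma card_of_iso {H : SimpleGraph (Fin k)} {G : SimpleGraph (Fin n)} {S : Finset (Fin n)}
    (e : H ≃g G.induce (S : Set (Fin n))) : S.card = k := by
  have := Fintype.card_congr e.toEquiv
  simpa using this.symm

open scoped Classical

lemma both_bound (H : SimpleGraph (Fin k)) (G : SimpleGraph (Fin n)) (u v : Fin n)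
    (huv : u ≠ v) :
    Set.ncard {S : Finset (Fin n) | u ∈ S ∧ v ∈ S ∧
        Nonempty (H ≃g (G.induce (S : Set (Fin n))))} ≤ (n - 2).choose (k - 2) := by
  have key : Set.ncard {S : Finset (Fin n) | u ∈ S ∧ v ∈ S ∧
        Nonempty (H ≃g (G.induce (S : Set (Fin n))))}
      ≤ Set.ncard ((Finset.powersetCard (k - 2)
          ((Finset.univ.erase u).erase v) : Finset (Finset (Fin n))) : Set (Finset (Fin n))) := by
    apply Set.ncard_le_ncard_of_injOn (fun S => (S.erase u).erase v)
    · rintro S ⟨hu, hv, ⟨e⟩⟩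
      have hcard : S.card = k := card_of_iso e
      have hvS : v ∈ S.erase u := Finset.mem_erase.2 ⟨Ne.symm huv, hv⟩
      simp only [Finset.coe_mem, Finset.mem_coe, Finset.mem_powersetCard]
      constructor
      · intro x hx
        simp only [Finset.mem_erase] at hx ⊢
        exact ⟨hx.1, hx.2.1, Finset.mem_univ x⟩
      · rw [Finset.card_erase_of_mem hvS, Finset.card_erase_of_mem hu, hcard]
        omega
    · rintro S₁ ⟨hu1, hv1, -⟩ S₂ ⟨hu2, hv2, -⟩ h
      have hvS1 : v ∈ S₁.erase u := Finset.mem_erase.2 ⟨Ne.symm huv, hv1⟩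
      have hvS2 : v ∈ S₂.erase u := Finset.mem_erase.2 ⟨Ne.symm huv, hv2⟩
      have h' : (S₁.erase u).erase v = (S₂.erase u).erase v := h
      have : insert u (insert v ((S₁.erase u).erase v))
          = insert u (insert v ((S₂.erase u).erase v)) := by rw [h']
      rwa [Finset.insert_erase hvS1, Finset.insert_erase hvS2,
        Finset.insert_erase hu1, Finset.insert_erase hu2] at this
  refine key.trans ?_
  rw [Set.ncard_coe_finset, Finset.card_powersetCard]
  have hv' : v ∈ Finset.univ.erase u := Finset.mem_erase.2 ⟨Ne.symm huv, Finset.mem_univ v⟩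
  rw [Finset.card_erase_of_mem hv', Finset.card_erase_of_mem (Finset.mem_univ u)]
  simp only [Finset.card_univ, Fintype.card_fin]
  have : n - 1 - 1 = n - 2 := by omega
  rw [this]

lemma count_le_max (H : SimpleGraph (Fin k)) (G : SimpleGraph (Fin n)) :
    inducedCount H G ≤ maxCount H n := by
  apply le_csSup
  · refine ⟨Set.ncard (Set.univ : Set (Finset (Fin n))), ?_⟩
    rintro m ⟨G0, rfl⟩
    exact Set.ncard_le_ncard (Set.subset_univ _) Set.finite_univ
  · exact ⟨G, rfl⟩

lemma key_ineq (H : SimpleGraph (Fin k)) (G : SimpleGraph (Fin n))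
    (hG : inducedCount H G = maxCount H n) (u v : Fin n) (huv : u ≠ v) :
    Set.ncard {S : Finset (Fin n) | u ∈ S ∧ Nonempty (H ≃g (G.induce (S : Set (Fin n))))}
      ≤ Set.ncard {S : Finset (Fin n) | v ∈ S ∧ Nonempty (H ≃g (G.induce (S : Set (Fin n))))}
        + (n - 2).choose (k - 2) := by
  classical
  set σ : Fin n ≃ Fin n := Equiv.swap u v with hσ
  set G' := clone G u v with hG'
  set A : Set (Finset (Fin n)) := {S | Nonempty (H ≃g (G.induce (S : Set (Fin n))))} with hA
  set A' : Set (Finset (Fin n)) := {S | Nonempty (H ≃g (G'.induce (S : Set (Fin n))))} with hA'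
  set Av : Set (Finset (Fin n)) := {S | v ∈ S ∧ S ∈ A} with hAv
  set Anv : Set (Finset (Fin n)) := {S | v ∉ S ∧ S ∈ A} with hAnv
  set CU : Set (Finset (Fin n)) := {S | u ∈ S ∧ v ∉ S ∧ S ∈ A} with hCU
  set Both : Set (Finset (Fin n)) := {S | u ∈ S ∧ v ∈ S ∧ S ∈ A} with hBoth
  -- total count splits
  have hsplit : Set.ncard A = Set.ncard Anv + Set.ncard Av := by
    rw [← Set.ncard_union_eq ?hd (Set.toFinite _) (Set.toFinite _)]
    · congr 1
      ext S
      by_cases h : v ∈ S <;> simp [Anv, Av, h]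
    case hd =>
      rw [Set.disjoint_left]
      rintro S ⟨h1, -⟩ ⟨h2, -⟩
      exact h1 h2
  -- the u-count is at most CU + Both
  have hu_le : Set.ncard {S : Finset (Fin n) | u ∈ S ∧
        Nonempty (H ≃g (G.induce (S : Set (Fin n))))} ≤ Set.ncard CU + Set.ncard Both := by
    refine le_trans (Set.ncard_le_ncard ?_ (Set.toFinite _)) (Set.ncard_union_le _ _)
    rintro S ⟨hu, he⟩
    by_cases h : v ∈ S
    · exact Or.inr ⟨hu, h, he⟩
    · exact Or.inl ⟨hu, h, he⟩
  -- injection into A'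
  have himg : Set.ncard Anv + Set.ncard CU ≤ Set.ncard A' := by
    have h1 : Anv ∪ (Finset.image σ) '' CU ⊆ A' := by
      rintro S (⟨hvS, ⟨e⟩⟩ | ⟨T, ⟨huT, hvT, ⟨e⟩⟩, rfl⟩)
      · exact ⟨e.trans (isoAvoid G u v S hvS)⟩
      · exact ⟨e.trans (isoSwap G u v T hvT)⟩
    have h2 : Disjoint Anv ((Finset.image σ) '' CU) := by
      rw [Set.disjoint_left]
      rintro S ⟨hvS, -⟩ ⟨T, ⟨huT, -, -⟩, rfl⟩
      exact hvS (Finset.mem_image.2 ⟨u, huT, Equiv.swap_apply_left u v⟩)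
    have h3 : Set.ncard ((Finset.image σ) '' CU) = Set.ncard CU :=
      Set.ncard_image_of_injective _ (Finset.image_injective σ.injective)
    calc Set.ncard Anv + Set.ncard CU
        = Set.ncard (Anv ∪ (Finset.image σ) '' CU) := by
          rw [Set.ncard_union_eq h2 (Set.toFinite _) (Set.toFinite _), h3]
      _ ≤ Set.ncard A' := Set.ncard_le_ncard h1 (Set.toFinite _)
  have hmax : Set.ncard A' ≤ Set.ncard A := by
    have := count_le_max H G'
    rw [← hG] at this
    exact this
  have hboth : Set.ncard Both ≤ (n - 2).choose (k - 2) := both_bound H G u v huv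
  have hv_eq : Set.ncard {S : Finset (Fin n) | v ∈ S ∧
      Nonempty (H ≃g (G.induce (S : Set (Fin n))))} = Set.ncard Av := rfl
  rw [hv_eq]
  omega
end ExtremalAux


theorem extremal_vertex_counts_close
    (k n : ℕ) (hk : 2 ≤ k) (hn : k ≤ n) (H : SimpleGraph (Fin k))
    (G : SimpleGraph (Fin n)) (hG : inducedCount H G = maxCount H n)
    (u v : Fin n) :
    |(Set.ncard {S : Finset (Fin n) |
        u ∈ S ∧ Nonempty (H ≃g (G.induce (S : Set (Fin n))))} : ℤ) -
      (Set.ncard {S : Finset (Fin n) |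
        v ∈ S ∧ Nonempty (H ≃g (G.induce (S : Set (Fin n))))} : ℤ)|
      ≤ ((n - 2).choose (k - 2) : ℤ) := by
  rcases eq_or_ne u v with rfl | huv
  · simp
  · have h1 := ExtremalAux.key_ineq H G hG u v huv
    have h2 := ExtremalAux.key_ineq H G hG v u huv.symm
    rw [abs_sub_le_iff]
    constructor <;> omega
end

section
/- For every ε > 0 there exists n₀ such that for every integer n ≥ n₀, every graph G on n vertices with I(Net, G) = N(n), and every vertex v of G, the number of 6-element vertex subsets S of G with v ∈ S and G[S] isomorphic to the net is at least (24/1555 − ε)·C(n,5). -/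
open SimpleGraph

open Classical in
lemma inducedCount_eq_filter {α β : Type*} [Fintype α] [Fintype β]
    (H : SimpleGraph α) (G : SimpleGraph β) :
    inducedCount H G =
      (Finset.univ.filter (fun S : Finset β => Nonempty (H ≃g (G.induce (S : Set β))))).card := by
  rw [inducedCount, Set.ncard_eq_toFinset_card']
  congr 1
  ext S
  simp

-- iso helper: from an injective map with adjacency compat
noncomputable def isoInduceOfMap {α β : Type*} (H : SimpleGraph α) (G : SimpleGraph β)
    (f : α → β) (hinj : Function.Injective f)
    (hadj : ∀ a b, H.Adj a b ↔ G.Adj (f a) (f b)) :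
    H ≃g G.induce (Set.range f) where
  toEquiv := Equiv.ofInjective f hinj
  map_rel_iff' := by
    intro a b
    simp [SimpleGraph.comap_adj, Equiv.ofInjective]
    exact (hadj a b).symm

lemma coe_image_univ {α β : Type*} [Fintype α] [DecidableEq β] (f : α → β) :
    ((Finset.univ.image f : Finset β) : Set β) = Set.range f := by
  simp

noncomputable def isoInduceInduce {β γ : Type*} (G : SimpleGraph β) (G' : SimpleGraph γ)
    (s : Set β) (f : β → γ) (hinj : Set.InjOn f s)
    (hadj : ∀ a ∈ s, ∀ b ∈ s, G.Adj a b ↔ G'.Adj (f a) (f b)) :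
    G.induce s ≃g G'.induce (f '' s) where
  toEquiv := Equiv.Set.imageOfInjOn f s hinj
  map_rel_iff' := by
    rintro ⟨a, ha⟩ ⟨b, hb⟩
    simp [SimpleGraph.comap_adj, Equiv.Set.imageOfInjOn]
    exact (hadj a ha b hb).symm

-- the recursive blow-up adjacency on ℕ
open Fin.NatCast in
def A (n x y : ℕ) : Prop :=
  if n < 6 then False
  else x < 6 * (n / 6) ∧ y < 6 * (n / 6) ∧
    (if x % 6 = y % 6 then A (n / 6) (x / 6) (y / 6)
     else netGraph.Adj ((x % 6 : ℕ) : Fin 6) ((y % 6 : ℕ) : Fin 6))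
termination_by n
decreasing_by exact Nat.div_lt_self (by omega) (by norm_num)

open Fin.NatCast in
lemma A_def (n x y : ℕ) : A n x y ↔
    (¬ n < 6 ∧ (x < 6 * (n / 6) ∧ y < 6 * (n / 6) ∧
    (if x % 6 = y % 6 then A (n / 6) (x / 6) (y / 6)
     else netGraph.Adj ((x % 6 : ℕ) : Fin 6) ((y % 6 : ℕ) : Fin 6)))) := by
  rw [A]
  split <;> simp_all

lemma A_symm (n : ℕ) : ∀ x y, A n x y → A n y x := by
  induction n using Nat.strong_induction_on with
  | _ n ih =>
    intro x y h
    rw [A_def] at h ⊢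
    obtain ⟨h6, hx, hy, hrest⟩ := h
    refine ⟨h6, hy, hx, ?_⟩
    by_cases hmod : x % 6 = y % 6
    · rw [if_pos hmod] at hrest
      rw [if_pos hmod.symm]
      exact ih (n/6) (Nat.div_lt_self (by omega) (by norm_num)) _ _ hrest
    · rw [if_neg hmod] at hrest
      rw [if_neg (fun h => hmod h.symm)]
      exact hrest.symm

lemma A_irrefl (n : ℕ) : ∀ x, ¬ A n x x := by
  induction n using Nat.strong_induction_on with
  | _ n ih =>
    intro x h
    rw [A_def] at h
    obtain ⟨h6, _, _, hrest⟩ := h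
    rw [if_pos rfl] at hrest
    exact ih (n/6) (Nat.div_lt_self (by omega) (by norm_num)) _ hrest

def B (n : ℕ) : SimpleGraph (Fin n) where
  Adj v w := A n v.val w.val
  symm := ⟨fun v w h => A_symm n _ _ h⟩
  loopless := ⟨fun v h => A_irrefl n _ h⟩

open Finset in
noncomputable def cfilt {β : Type*} [Fintype β] (G : SimpleGraph β) : Finset (Finset β) :=
  @Finset.filter _ (fun S => Nonempty (netGraph ≃g G.induce (S : Set β))) (Classical.decPred _) univ

lemma mem_cfilt {β : Type*} [Fintype β] (G : SimpleGraph β) (S : Finset β) :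
    S ∈ cfilt G ↔ Nonempty (netGraph ≃g G.induce (S : Set β)) := by
  simp [cfilt]

lemma inducedCount_eq_cfilt {β : Type*} [Fintype β] (G : SimpleGraph β) :
    inducedCount netGraph G = (cfilt G).card := by
  classical
  rw [inducedCount_eq_filter, cfilt]

lemma card_eq_six_of_mem_cfilt {β : Type*} [Fintype β] {G : SimpleGraph β} {S : Finset β}
    (h : S ∈ cfilt G) : S.card = 6 := by
  rw [mem_cfilt] at h
  obtain ⟨e⟩ := h
  have := Fintype.card_congr e.toEquiv
  simpa using this.symm

def enc (n : ℕ) (h : 6 ≤ n) (s : Fin (n / 6)) (i : Fin 6) : Fin n :=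
  ⟨6 * s.val + i.val, by
    have hs := s.isLt; have hi := i.isLt
    have : n / 6 * 6 ≤ n := Nat.div_mul_le_self n 6
    omega⟩

lemma enc_mod (n : ℕ) (h : 6 ≤ n) (s : Fin (n / 6)) (i : Fin 6) :
    (enc n h s i).val % 6 = i.val := by
  have := i.isLt; simp [enc]

lemma enc_div (n : ℕ) (h : 6 ≤ n) (s : Fin (n / 6)) (i : Fin 6) :
    (enc n h s i).val / 6 = s.val := by
  have := i.isLt; simp [enc]; omega

lemma enc_inj (n : ℕ) (h : 6 ≤ n) {s t : Fin (n / 6)} {i j : Fin 6}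
    (he : enc n h s i = enc n h t j) : s = t ∧ i = j := by
  have h1 := congrArg Fin.val he
  simp [enc] at h1
  have := i.isLt; have := j.isLt
  constructor <;> [apply Fin.ext; apply Fin.ext] <;> omega

lemma enc_lt (n : ℕ) (h : 6 ≤ n) (s : Fin (n / 6)) (i : Fin 6) :
    (enc n h s i).val < 6 * (n / 6) := by
  have := s.isLt; have := i.isLt; simp [enc]; omega

open Fin.NatCast in
lemma B_adj_enc_ne (n : ℕ) (h : 6 ≤ n) (s t : Fin (n / 6)) (i j : Fin 6) (hij : i ≠ j) :
    (B n).Adj (enc n h s i) (enc n h t j) ↔ netGraph.Adj i j := by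
  show A n _ _ ↔ _
  rw [A_def]
  have hmodi := enc_mod n h s i
  have hmodj := enc_mod n h t j
  have hne : (enc n h s i).val % 6 ≠ (enc n h t j).val % 6 := by
    rw [hmodi, hmodj]; exact fun hc => hij (Fin.ext hc)
  rw [if_neg hne, hmodi, hmodj, Fin.cast_val_eq_self, Fin.cast_val_eq_self]
  have h1 := enc_lt n h s i
  have h2 := enc_lt n h t j
  constructor
  · rintro ⟨_, _, _, hr⟩; exact hr
  · intro hr; exact ⟨by omega, h1, h2, hr⟩

lemma B_adj_enc_eq (n : ℕ) (h : 6 ≤ n) (s t : Fin (n / 6)) (i : Fin 6) :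
    (B n).Adj (enc n h s i) (enc n h t i) ↔ (B (n / 6)).Adj s t := by
  show A n _ _ ↔ A (n/6) s.val t.val
  rw [A_def]
  have hmods := enc_mod n h s i
  have hmodt := enc_mod n h t i
  rw [if_pos (by rw [hmods, hmodt]), enc_div, enc_div]
  have h1 := enc_lt n h s i
  have h2 := enc_lt n h t i
  constructor
  · rintro ⟨_, _, _, hr⟩; exact hr
  · intro hr; exact ⟨by omega, h1, h2, hr⟩

open Finset

section Rec
variable (n : ℕ) (h : 6 ≤ n)

noncomputable def TransSet (t : Fin 6 → Fin (n / 6)) : Finset (Fin n) :=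
  univ.image (fun i => enc n h (t i) i)

lemma mem_transSet (t : Fin 6 → Fin (n / 6)) (x : Fin n) :
    x ∈ TransSet n h t ↔ ∃ i, enc n h (t i) i = x := by
  simp [TransSet]

lemma transSet_mem_cfilt (t : Fin 6 → Fin (n / 6)) : TransSet n h t ∈ cfilt (B n) := by
  rw [mem_cfilt]
  have hs : ((TransSet n h t : Finset (Fin n)) : Set (Fin n))
      = Set.range (fun i => enc n h (t i) i) := by
    simp [TransSet]
  rw [hs]
  refine ⟨isoInduceOfMap netGraph (B n) _ ?_ ?_⟩
  · intro a b hab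
    exact (enc_inj n h hab).2
  · intro a b
    by_cases hab : a = b
    · subst hab
      simp [SimpleGraph.irrefl]
    · rw [B_adj_enc_ne n h _ _ _ _ hab]

lemma transSet_inj : Function.Injective (TransSet n h) := by
  intro t t' he
  funext i
  have : enc n h (t i) i ∈ TransSet n h t' := by
    rw [← he, mem_transSet]; exact ⟨i, rfl⟩
  rw [mem_transSet] at this
  obtain ⟨j, hj⟩ := this
  obtain ⟨h1, h2⟩ := enc_inj n h hj
  rw [← h2] at h1 ⊢
  exact h1.symm

noncomputable def PartSet (i : Fin 6) (S' : Finset (Fin (n / 6))) : Finset (Fin n) :=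
  S'.image (fun s => enc n h s i)

lemma mem_partSet (i : Fin 6) (S' : Finset (Fin (n / 6))) (x : Fin n) :
    x ∈ PartSet n h i S' ↔ ∃ s ∈ S', enc n h s i = x := by
  simp [PartSet]

lemma partSet_mem_cfilt (i : Fin 6) (S' : Finset (Fin (n / 6)))
    (hS' : S' ∈ cfilt (B (n / 6))) : PartSet n h i S' ∈ cfilt (B n) := by
  rw [mem_cfilt] at hS' ⊢
  obtain ⟨e⟩ := hS'
  have iso2 : (B (n / 6)).induce (S' : Set (Fin (n / 6))) ≃g
      (B n).induce ((fun s => enc n h s i) '' (S' : Set (Fin (n / 6)))) := by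
    refine isoInduceInduce _ _ _ _ ?_ ?_
    · intro a _ b _ hab
      exact (enc_inj n h hab).1
    · intro a _ b _
      exact (B_adj_enc_eq n h a b i).symm
  have hs : ((PartSet n h i S' : Finset (Fin n)) : Set (Fin n))
      = (fun s => enc n h s i) '' (S' : Set (Fin (n / 6))) := by
    simp [PartSet]
  rw [hs]
  exact ⟨e.trans iso2⟩

lemma partSet_inj (i : Fin 6) : Function.Injective (PartSet n h i) := by
  apply Finset.image_injective
  intro a b hab
  exact (enc_inj n h hab).1

lemma partSet_residue (i : Fin 6) (S' : Finset (Fin (n / 6))) (x : Fin n)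
    (hx : x ∈ PartSet n h i S') : x.val % 6 = i.val := by
  rw [mem_partSet] at hx
  obtain ⟨s, _, hs⟩ := hx
  rw [← hs]
  exact enc_mod n h s i

include h in
lemma count_rec : (n / 6) ^ 6 + 6 * (cfilt (B (n / 6))).card ≤ (cfilt (B n)).card := by
  classical
  set T : Finset (Finset (Fin n)) := univ.image (TransSet n h) with hT
  set P : Finset (Finset (Fin n)) :=
    (univ : Finset (Fin 6)).biUnion (fun i => (cfilt (B (n / 6))).image (PartSet n h i)) with hP
  have cardT : T.card = (n / 6) ^ 6 := by
    rw [hT, Finset.card_image_of_injective _ (transSet_inj n h), card_univ]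
    simp [Fintype.card_fun]
  have cardP : P.card = 6 * (cfilt (B (n / 6))).card := by
    rw [hP, Finset.card_biUnion]
    · simp [Finset.card_image_of_injective _ (partSet_inj n h _)]
    · intro i _ j _ hij
      rw [Function.onFun, Finset.disjoint_left]
      intro S hSi hSj
      simp only [Finset.mem_image] at hSi hSj
      obtain ⟨S1, hS1, rfl⟩ := hSi
      obtain ⟨S2, hS2, hS2e⟩ := hSj
      have hc : S1.card = 6 := card_eq_six_of_mem_cfilt hS1
      have hne : (PartSet n h i S1).Nonempty := by
        rw [PartSet]
        apply Finset.Nonempty.image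
        rw [← Finset.card_pos, hc]; norm_num
      obtain ⟨x, hx⟩ := hne
      have r1 := partSet_residue n h i S1 x hx
      have r2 := partSet_residue n h j S2 x (hS2e ▸ hx)
      exact hij (Fin.ext (by omega))
  have hTP : Disjoint T P := by
    rw [Finset.disjoint_left]
    intro S hST hSP
    rw [hT, Finset.mem_image] at hST
    obtain ⟨t, _, rfl⟩ := hST
    rw [hP, Finset.mem_biUnion] at hSP
    obtain ⟨i, _, hSi⟩ := hSP
    rw [Finset.mem_image] at hSi
    obtain ⟨S', _, hS'⟩ := hSi
    have h0 : enc n h (t 0) 0 ∈ TransSet n h t := by rw [mem_transSet]; exact ⟨0, rfl⟩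
    have h1 : enc n h (t 1) 1 ∈ TransSet n h t := by rw [mem_transSet]; exact ⟨1, rfl⟩
    have r0 := partSet_residue n h i S' _ (hS' ▸ h0)
    have r1 := partSet_residue n h i S' _ (hS' ▸ h1)
    rw [enc_mod] at r0 r1
    simp [Fin.val_zero, Fin.val_one] at r0 r1
    omega
  have hsub : T ∪ P ⊆ cfilt (B n) := by
    intro S hS
    rw [Finset.mem_union] at hS
    rcases hS with hS | hS
    · rw [hT, Finset.mem_image] at hS
      obtain ⟨t, _, rfl⟩ := hS
      exact transSet_mem_cfilt n h t
    · rw [hP, Finset.mem_biUnion] at hS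
      obtain ⟨i, _, hSi⟩ := hS
      rw [Finset.mem_image] at hSi
      obtain ⟨S', hS', rfl⟩ := hSi
      exact partSet_mem_cfilt n h i S' hS'
  calc (n / 6) ^ 6 + 6 * (cfilt (B (n / 6))).card = T.card + P.card := by rw [cardT, cardP]
    _ = (T ∪ P).card := (Finset.card_union_of_disjoint hTP).symm
    _ ≤ (cfilt (B n)).card := Finset.card_le_card hsub

end Rec

lemma nat_ineq (m : ℕ) (hm : 1 ≤ m) :
    (6 * m - 1) ^ 6 ≤ 46650 * m ^ 6 + 6 * (m - 6) ^ 6 := by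
  rcases le_or_gt m 5 with hm5 | hm5
  · interval_cases m <;> norm_num
  · obtain ⟨y, rfl⟩ : ∃ y, m = y + 6 := ⟨m - 6, by omega⟩
    have h1 : 6 * (y + 6) - 1 = 6 * y + 35 := by omega
    have h2 : y + 6 - 6 = y := by omega
    rw [h1, h2]
    have hid : 46650 * (y + 6) ^ 6 + 6 * y ^ 6 =
        (6 * y + 35) ^ 6 + (46440 * y ^ 5 + 1377000 * y ^ 4 + 16308000 * y ^ 3 +
          96538500 * y ^ 2 + 285714900 * y + 338236775) := by ring
    rw [hid]
    exact Nat.le_add_right _ _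

lemma B_lb : ∀ n : ℕ, (n - 6) ^ 6 ≤ 46650 * (cfilt (B n)).card := by
  intro n
  induction n using Nat.strong_induction_on with
  | _ n ih =>
    rcases le_or_gt n 6 with h6 | h6
    · have : n - 6 = 0 := by omega
      rw [this]
      simp
    · have h : 6 ≤ n := by omega
      set m := n / 6 with hm
      have hm1 : 1 ≤ m := by rw [hm]; omega
      have hrec := count_rec n h
      have hIH := ih m (by rw [hm]; exact Nat.div_lt_self (by omega) (by norm_num))
      calc (n - 6) ^ 6 ≤ (6 * m - 1) ^ 6 := by
            apply Nat.pow_le_pow_left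
            rw [hm]; omega
        _ ≤ 46650 * m ^ 6 + 6 * (m - 6) ^ 6 := nat_ineq m hm1
        _ ≤ 46650 * m ^ 6 + 6 * (46650 * (cfilt (B m)).card) := by
            apply Nat.add_le_add_left
            exact Nat.mul_le_mul_left 6 hIH
        _ = 46650 * (m ^ 6 + 6 * (cfilt (B m)).card) := by ring
        _ ≤ 46650 * (cfilt (B n)).card := Nat.mul_le_mul_left _ hrec

lemma inducedCount_le_pow {n : ℕ} (G : SimpleGraph (Fin n)) :
    inducedCount netGraph G ≤ 2 ^ n := by
  rw [inducedCount_eq_cfilt]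
  calc (cfilt G).card ≤ (univ : Finset (Finset (Fin n))).card :=
        Finset.card_le_card (Finset.subset_univ _)
    _ = 2 ^ n := by simp

lemma bddAbove_counts (n : ℕ) :
    BddAbove {m | ∃ G : SimpleGraph (Fin n), inducedCount netGraph G = m} := by
  refine ⟨2 ^ n, ?_⟩
  rintro m ⟨G, rfl⟩
  exact inducedCount_le_pow G

lemma le_netMax {n : ℕ} (G : SimpleGraph (Fin n)) : inducedCount netGraph G ≤ netMax n :=
  le_csSup (bddAbove_counts n) ⟨G, rfl⟩

lemma netMax_lb (n : ℕ) : (n - 6) ^ 6 ≤ 46650 * netMax n := by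
  calc (n - 6) ^ 6 ≤ 46650 * (cfilt (B n)).card := B_lb n
    _ = 46650 * inducedCount netGraph (B n) := by rw [inducedCount_eq_cfilt]
    _ ≤ 46650 * netMax n := Nat.mul_le_mul_left _ (le_netMax (B n))

noncomputable def cvIn {n : ℕ} (G : SimpleGraph (Fin n)) (v : Fin n) : ℕ :=
  ((cfilt G).filter (fun S => v ∈ S)).card

lemma handshake {n : ℕ} (G : SimpleGraph (Fin n)) :
    ∑ v, cvIn G v = 6 * (cfilt G).card := by
  have key : ∀ v : Fin n, cvIn G v = ∑ S ∈ cfilt G, if v ∈ S then 1 else 0 := by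
    intro v; rw [cvIn, Finset.card_filter]
  calc ∑ v, cvIn G v = ∑ v, ∑ S ∈ cfilt G, if v ∈ S then 1 else 0 := by
        exact Finset.sum_congr rfl fun v _ => key v
    _ = ∑ S ∈ cfilt G, ∑ v, if v ∈ S then 1 else 0 := Finset.sum_comm
    _ = ∑ S ∈ cfilt G, S.card := by
        refine Finset.sum_congr rfl fun S _ => ?_
        rw [← Finset.card_filter]
        rw [Finset.filter_univ_mem]
    _ = ∑ _S ∈ cfilt G, 6 := Finset.sum_congr rfl fun S hS => card_eq_six_of_mem_cfilt hS
    _ = 6 * (cfilt G).card := by rw [Finset.sum_const, smul_eq_mul, mul_comm]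

lemma exists_max_cvIn {n : ℕ} (hn : 1 ≤ n) (G : SimpleGraph (Fin n)) :
    ∃ u : Fin n, 6 * (cfilt G).card ≤ n * cvIn G u := by
  obtain ⟨u, _, hmax⟩ := Finset.exists_max_image (univ : Finset (Fin n)) (cvIn G)
    (by simpa [Finset.univ_nonempty_iff] using Fin.pos_iff_nonempty.mp hn)
  refine ⟨u, ?_⟩
  calc 6 * (cfilt G).card = ∑ v, cvIn G v := (handshake G).symm
    _ ≤ (univ : Finset (Fin n)).card • cvIn G u :=
        Finset.sum_le_card_nsmul _ _ _ (fun v _ => hmax v (Finset.mem_univ v))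
    _ = n * cvIn G u := by simp [smul_eq_mul]

def clone {n : ℕ} (G : SimpleGraph (Fin n)) (u v : Fin n) : SimpleGraph (Fin n) where
  Adj x y := x ≠ y ∧ G.Adj (if x = v then u else x) (if y = v then u else y)
  symm := ⟨fun x y ⟨h1, h2⟩ => ⟨h1.symm, h2.symm⟩⟩
  loopless := ⟨fun x h => h.1 rfl⟩

lemma both_le_choose4 {n : ℕ} (G : SimpleGraph (Fin n)) (u v : Fin n) (huv : u ≠ v) :
    ((cfilt G).filter (fun S => u ∈ S ∧ v ∈ S)).card ≤ n.choose 4 := by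
  classical
  have : ((cfilt G).filter (fun S => u ∈ S ∧ v ∈ S)).card ≤
      ((univ : Finset (Fin n)).powersetCard 4).card := by
    apply Finset.card_le_card_of_injOn (fun S => (S.erase u).erase v)
    · intro S hS
      rw [Finset.mem_coe, Finset.mem_filter] at hS
      obtain ⟨hS1, hu, hv⟩ := hS
      rw [Finset.mem_coe, Finset.mem_powersetCard]
      refine ⟨Finset.subset_univ _, ?_⟩
      rw [Finset.card_erase_of_mem (Finset.mem_erase.mpr ⟨fun h => huv h.symm, hv⟩),
        Finset.card_erase_of_mem hu, card_eq_six_of_mem_cfilt hS1]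
    · intro S hS S' hS'
      simp only [Finset.coe_filter, Set.mem_setOf_eq] at hS hS'
      intro he
      have hrec : ∀ T : Finset (Fin n), u ∈ T → v ∈ T →
          insert u (insert v ((T.erase u).erase v)) = T := by
        intro T hu hv
        rw [Finset.insert_erase (Finset.mem_erase.mpr ⟨fun h => huv h.symm, hv⟩),
          Finset.insert_erase hu]
      simp only at he
      rw [← hrec S hS.2.1 hS.2.2, ← hrec S' hS'.2.1 hS'.2.2, he]
  calc _ ≤ _ := this
    _ = n.choose 4 := by rw [Finset.card_powersetCard]; simp

lemma clone_count {n : ℕ} (G : SimpleGraph (Fin n)) (u v : Fin n) (huv : u ≠ v) :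
    ((cfilt G).filter (fun S => v ∉ S)).card
      + ((cfilt G).filter (fun S => u ∈ S ∧ v ∉ S)).card
      ≤ (cfilt (clone G u v)).card := by
  classical
  set g : Fin n → Fin n := fun x => if x = u then v else x with hg
  set f : Fin n → Fin n := fun x => if x = v then u else x with hf
  set A := (cfilt G).filter (fun S => v ∉ S) with hA
  set Bsrc := (cfilt G).filter (fun S => u ∈ S ∧ v ∉ S) with hB
  set Bim := Bsrc.image (fun S => S.image g) with hBim
  have hfg : ∀ (S : Finset (Fin n)), v ∉ S → ∀ a ∈ S, f (g a) = a := by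
    intro S hv a ha
    by_cases hau : a = u
    · simp [hg, hf, hau, huv.symm]
    · have hav : a ≠ v := fun h => hv (h ▸ ha)
      simp [hg, hf, hau, hav]
  have hsubA : A ⊆ cfilt (clone G u v) := by
    intro S hS
    rw [hA, Finset.mem_filter] at hS
    obtain ⟨hS1, hv⟩ := hS
    rw [mem_cfilt] at hS1 ⊢
    obtain ⟨e⟩ := hS1
    have iso2 : G.induce (S : Set (Fin n)) ≃g
        (clone G u v).induce (id '' (S : Set (Fin n))) := by
      refine isoInduceInduce _ _ _ _ (Set.injOn_id _) ?_
      intro a ha b hb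
      have hav : a ≠ v := fun h => hv (h ▸ (Finset.mem_coe.mp ha))
      have hbv : b ≠ v := fun h => hv (h ▸ (Finset.mem_coe.mp hb))
      show G.Adj a b ↔ (a : Fin n) ≠ b ∧ G.Adj (if id a = v then u else id a) (if id b = v then u else id b)
      simp only [id_eq]
      rw [if_neg hav, if_neg hbv]
      exact ⟨fun h => ⟨h.ne, h⟩, fun h => h.2⟩
    rw [Set.image_id] at iso2
    exact ⟨e.trans iso2⟩
  have hsubB : ∀ S ∈ Bsrc, S.image g ∈ cfilt (clone G u v) ∧ v ∈ S.image g := by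
    intro S hS
    rw [hB, Finset.mem_filter] at hS
    obtain ⟨hS1, hu, hv⟩ := hS
    constructor
    · rw [mem_cfilt] at hS1 ⊢
      obtain ⟨e⟩ := hS1
      have hinj : Set.InjOn g (S : Set (Fin n)) := by
        intro a ha b hb hab
        have := hfg S hv a ha
        have := hfg S hv b hb
        calc a = f (g a) := (hfg S hv a ha).symm
          _ = f (g b) := by rw [hab]
          _ = b := hfg S hv b hb
      have iso2 : G.induce (S : Set (Fin n)) ≃g
          (clone G u v).induce (g '' (S : Set (Fin n))) := by
        refine isoInduceInduce _ _ _ _ hinj ?_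
        intro a ha b hb
        show G.Adj a b ↔ g a ≠ g b ∧ G.Adj (if g a = v then u else g a) _
        have e1 : (if g a = v then u else g a) = a := by
          have := hfg S hv a ha
          simp only [hf] at this
          exact this
        have e2 : (if g b = v then u else g b) = b := by
          have := hfg S hv b hb
          simp only [hf] at this
          exact this
        rw [e1, e2]
        constructor
        · intro h
          refine ⟨fun hc => h.ne (hinj ha hb hc), h⟩
        · exact fun h => h.2
      have : ((S.image g : Finset (Fin n)) : Set (Fin n)) = g '' (S : Set (Fin n)) :=
        Finset.coe_image
      rw [this]
      exact ⟨e.trans iso2⟩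
    · rw [Finset.mem_image]
      exact ⟨u, hu, by simp [hg]⟩
  have hBimsub : Bim ⊆ cfilt (clone G u v) := by
    intro T hT
    rw [hBim, Finset.mem_image] at hT
    obtain ⟨S, hS, rfl⟩ := hT
    exact (hsubB S hS).1
  have hdisj : Disjoint A Bim := by
    rw [Finset.disjoint_left]
    intro T hTA hTB
    rw [hA, Finset.mem_filter] at hTA
    rw [hBim, Finset.mem_image] at hTB
    obtain ⟨S, hS, rfl⟩ := hTB
    exact hTA.2 (hsubB S hS).2
  have hcardBim : Bim.card = Bsrc.card := by
    rw [hBim]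
    apply Finset.card_image_of_injOn
    intro S hS S' hS' he
    have hrecov : ∀ T ∈ Bsrc, (T.image g).image f = T := by
      intro T hT
      rw [hB, Finset.mem_filter] at hT
      rw [Finset.image_image]
      calc T.image (f ∘ g) = T.image id := Finset.image_congr (fun a ha => hfg T hT.2.2 a ha)
        _ = T := Finset.image_id
    simp only at he
    rw [← hrecov S (Finset.mem_coe.mp hS), ← hrecov S' (Finset.mem_coe.mp hS'), he]
  calc A.card + Bsrc.card = A.card + Bim.card := by rw [hcardBim]
    _ = (A ∪ Bim).card := (Finset.card_union_of_disjoint hdisj).symm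
    _ ≤ (cfilt (clone G u v)).card := Finset.card_le_card (Finset.union_subset hsubA hBimsub)

lemma cvIn_bound {n : ℕ} (hn : 1 ≤ n) (G : SimpleGraph (Fin n))
    (hG : inducedCount netGraph G = netMax n) (v : Fin n) :
    6 * (cfilt G).card ≤ n * cvIn G v + n * n.choose 4 := by
  classical
  obtain ⟨u, hu⟩ := exists_max_cvIn hn G
  by_cases huv : u = v
  · subst huv
    exact le_trans hu (Nat.le_add_right _ _)
  · have h1 : (cfilt (clone G u v)).card ≤ (cfilt G).card := by
      rw [← inducedCount_eq_cfilt, ← inducedCount_eq_cfilt, hG]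
      exact le_netMax _
    have h2 := clone_count G u v huv
    have p1 := Finset.card_filter_add_card_filter_not
      (s := cfilt G) (p := fun S => v ∈ S)
    have p2 := Finset.card_filter_add_card_filter_not
      (s := (cfilt G).filter (fun S => u ∈ S)) (p := fun S => v ∈ S)
    rw [Finset.filter_filter, Finset.filter_filter] at p2
    have p3 := both_le_choose4 G u v huv
    have hcv : cvIn G v = ((cfilt G).filter (fun S => v ∈ S)).card := rfl
    have hcu : cvIn G u = ((cfilt G).filter (fun S => u ∈ S)).card := rfl
    have key : cvIn G u ≤ cvIn G v + n.choose 4 := by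
      omega
    calc 6 * (cfilt G).card ≤ n * cvIn G u := hu
      _ ≤ n * (cvIn G v + n.choose 4) := Nat.mul_le_mul_left n key
      _ = n * cvIn G v + n * n.choose 4 := by ring

lemma goal_set_eq {n : ℕ} (G : SimpleGraph (Fin n)) (v : Fin n) :
    {S : Finset (Fin n) |
      v ∈ S ∧ Nonempty (netGraph ≃g (G.induce (S : Set (Fin n))))}.ncard = cvIn G v := by
  classical
  have hset : {S : Finset (Fin n) |
      v ∈ S ∧ Nonempty (netGraph ≃g (G.induce (S : Set (Fin n))))}
      = ↑((cfilt G).filter (fun S => v ∈ S)) := by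
    ext S
    simp only [Set.mem_setOf_eq, Finset.coe_filter, Finset.mem_coe, Finset.mem_filter,
      mem_cfilt]
    tauto
  rw [hset, Set.ncard_coe_finset]
  rfl

lemma poly_e3 {x : ℝ} (hx : 6 ≤ x) : x ^ 6 - 36 * x ^ 5 ≤ (x - 6) ^ 6 := by
  have hy : (0:ℝ) ≤ x - 6 := by linarith
  have hid : (x - 6) ^ 6 = x ^ 6 - 36 * x ^ 5 +
      (540 * (x-6)^4 + 8640 * (x-6)^3 + 58320 * (x-6)^2 + 186624 * (x-6) + 233280) := by
    ring
  nlinarith [pow_nonneg hy 4, pow_nonneg hy 3, pow_nonneg hy 2]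

lemma poly_e4 {x : ℝ} (hx : 50 ≤ x) : x ^ 5 ≤ 2 * (x - 4) ^ 5 := by
  have hy : (0:ℝ) ≤ x - 50 := by linarith
  have hid : 2 * (x - 4) ^ 5 - x ^ 5 = (x-50)^5 + 210 * (x-50)^4 + 17320 * (x-50)^3 +
      696720 * (x-50)^2 + 13524560 * (x-50) + 99425952 := by
    ring
  nlinarith [pow_nonneg hy 5, pow_nonneg hy 4, pow_nonneg hy 3, pow_nonneg hy 2]

theorem every_vertex_in_many_nets :
    ∀ ε : ℝ, 0 < ε → ∃ n₀ : ℕ, ∀ n : ℕ, n₀ ≤ n → ∀ G : SimpleGraph (Fin n),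
      inducedCount netGraph G = netMax n → ∀ v : Fin n,
        (24 / 1555 - ε) * (n.choose 5 : ℝ) ≤
          (Set.ncard {S : Finset (Fin n) |
            v ∈ S ∧ Nonempty (netGraph ≃g (G.induce (S : Set (Fin n))))} : ℝ) := by
  intro ε hε
  refine ⟨max 50 ⌈24 / ε⌉₊, ?_⟩
  intro n hn G hG v
  have hn50 : 50 ≤ n := le_trans (le_max_left _ _) hn
  have hε24 : (24 : ℝ) ≤ ε * n := by
    have h1 : ⌈24 / ε⌉₊ ≤ n := le_trans (le_max_right _ _) hn
    have h2 : (24 / ε : ℝ) ≤ n := by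
      calc (24 / ε : ℝ) ≤ ⌈24 / ε⌉₊ := Nat.le_ceil _
        _ ≤ n := by exact_mod_cast h1
    calc (24 : ℝ) = (24 / ε) * ε := by field_simp
      _ ≤ n * ε := mul_le_mul_of_nonneg_right h2 hε.le
      _ = ε * n := mul_comm _ _
  -- nat facts
  have hmain : 6 * (cfilt G).card ≤ n * cvIn G v + n * n.choose 4 :=
    cvIn_bound (by omega) G hG v
  have hlb : (n - 6) ^ 6 ≤ 46650 * (cfilt G).card := by
    have h1 := netMax_lb n
    rw [← hG, inducedCount_eq_cfilt] at h1
    exact h1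
  have hc5u : 120 * n.choose 5 ≤ n ^ 5 := by
    have h1 : n.descFactorial 5 = 120 * n.choose 5 := by
      rw [Nat.descFactorial_eq_factorial_mul_choose]
      norm_num [Nat.factorial]
    rw [← h1]
    exact Nat.descFactorial_le_pow n 5
  have hc5l : (n - 4) ^ 5 ≤ 120 * n.choose 5 := by
    have h1 : n.descFactorial 5 = 120 * n.choose 5 := by
      rw [Nat.descFactorial_eq_factorial_mul_choose]
      norm_num [Nat.factorial]
    rw [← h1]
    have := Nat.pow_sub_le_descFactorial n 5
    have he : n + 1 - 5 = n - 4 := by omega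
    rwa [he] at this
  have hc4u : 24 * n.choose 4 ≤ n ^ 4 := by
    have h1 : n.descFactorial 4 = 24 * n.choose 4 := by
      rw [Nat.descFactorial_eq_factorial_mul_choose]
      norm_num [Nat.factorial]
    rw [← h1]
    exact Nat.descFactorial_le_pow n 4
  -- move to ℝ
  rw [goal_set_eq G v]
  have hx50 : (50 : ℝ) ≤ (n : ℝ) := by exact_mod_cast hn50
  have R1 : 6 * (((cfilt G).card : ℕ) : ℝ) ≤
      (n : ℝ) * ((cvIn G v : ℕ) : ℝ) + (n : ℝ) * ((n.choose 4 : ℕ) : ℝ) := by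
    exact_mod_cast hmain
  have R2 : ((n : ℝ) - 6) ^ 6 ≤ 46650 * (((cfilt G).card : ℕ) : ℝ) := by
    have hcast : ((n - 6 : ℕ) : ℝ) = (n : ℝ) - 6 := by
      rw [Nat.cast_sub (by omega)]; norm_num
    calc ((n : ℝ) - 6) ^ 6 = ((n - 6 : ℕ) : ℝ) ^ 6 := by rw [hcast]
      _ ≤ 46650 * (((cfilt G).card : ℕ) : ℝ) := by exact_mod_cast hlb
  have R3 : 120 * ((n.choose 5 : ℕ) : ℝ) ≤ (n : ℝ) ^ 5 := by exact_mod_cast hc5u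
  have R4 : ((n : ℝ) - 4) ^ 5 ≤ 120 * ((n.choose 5 : ℕ) : ℝ) := by
    have hcast : ((n - 4 : ℕ) : ℝ) = (n : ℝ) - 4 := by
      rw [Nat.cast_sub (by omega)]; norm_num
    calc ((n : ℝ) - 4) ^ 5 = ((n - 4 : ℕ) : ℝ) ^ 5 := by rw [hcast]
      _ ≤ 120 * ((n.choose 5 : ℕ) : ℝ) := by exact_mod_cast hc5l
  have R5 : 24 * ((n.choose 4 : ℕ) : ℝ) ≤ (n : ℝ) ^ 4 := by exact_mod_cast hc4u
  set x : ℝ := (n : ℝ) with hxdef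
  set cv : ℝ := ((cvIn G v : ℕ) : ℝ) with hcvdef
  set N : ℝ := (((cfilt G).card : ℕ) : ℝ) with hNdef
  set C4 : ℝ := ((n.choose 4 : ℕ) : ℝ) with hC4def
  set C5 : ℝ := ((n.choose 5 : ℕ) : ℝ) with hC5def
  have hx : (0 : ℝ) < x := by linarith
  have hC5nn : (0:ℝ) ≤ C5 := by positivity
  have hC4nn : (0:ℝ) ≤ C4 := by positivity
  have hx5nn : (0:ℝ) ≤ x ^ 5 := by positivity
  -- intermediate bounds
  have e1 : x * ((24/1555) * C5) ≤ x ^ 6 / 7775 := by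
    have h1 : C5 ≤ x ^ 5 / 120 := by linarith
    have h2 : x * ((24/1555) * C5) ≤ x * ((24/1555) * (x ^ 5 / 120)) := by
      apply mul_le_mul_of_nonneg_left _ hx.le
      apply mul_le_mul_of_nonneg_left h1 (by norm_num)
    calc x * ((24/1555) * C5) ≤ x * ((24/1555) * (x ^ 5 / 120)) := h2
      _ = x ^ 6 / 7775 := by ring
  have e2 : x * C4 ≤ x ^ 5 / 24 := by
    have h1 : C4 ≤ x ^ 4 / 24 := by linarith
    calc x * C4 ≤ x * (x ^ 4 / 24) := mul_le_mul_of_nonneg_left h1 hx.le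
      _ = x ^ 5 / 24 := by ring
  have e3 : x ^ 6 - 36 * x ^ 5 ≤ (x - 6) ^ 6 := poly_e3 (by linarith)
  have e4 : x ^ 5 / 10 ≤ x * (ε * C5) := by
    have h2 : x ^ 5 / 10 ≤ (x - 4) ^ 5 / 5 := by
      have := poly_e4 hx50
      linarith
    have h3 : (24 : ℝ) * C5 ≤ (ε * x) * C5 := mul_le_mul_of_nonneg_right hε24 hC5nn
    calc x ^ 5 / 10 ≤ (x - 4) ^ 5 / 5 := h2
      _ ≤ (120 * C5) / 5 := by linarith
      _ = 24 * C5 := by ring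
      _ ≤ (ε * x) * C5 := h3
      _ = x * (ε * C5) := by ring
  have key : x * ((24 / 1555 - ε) * C5) ≤ x * cv := by
    have expand : x * ((24 / 1555 - ε) * C5)
        = x * ((24/1555) * C5) - x * (ε * C5) := by ring
    rw [expand]
    linarith [e1, e2, e3, e4, R1, R2]
  exact (mul_le_mul_iff_right₀ hx).mp key
end

section
/- Let G be a blow-up of the net with parts X₁,…,X₆. Then every induced copy of the net in G either has exactly one vertex in each of the six parts or has all six of its vertices inside a single part, and consequently I(Net, G) = |X₁|·|X₂|·|X₃|·|X₄|·|X₅|·|X₆| + ∑_{i=1}^{6} I(Net, G[X_i]), where G[X_i] is the subgraph of G induced on X_i. -/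
open SimpleGraph

/-- `G` is a blow-up of the net along the labeling `φ`: vertices with distinct
labels are adjacent iff their labels are adjacent in the net. -/
def IsNetBlowup {V : Type*} (G : SimpleGraph V) (φ : V → Fin 6) : Prop :=
  ∀ u v : V, φ u ≠ φ v → (G.Adj u v ↔ netGraph.Adj (φ u) (φ v))

lemma inducedCount_eq_card {α β : Type*} [Fintype α] [Fintype β] (H : SimpleGraph α)
    (G : SimpleGraph β)
    [DecidablePred fun S : Finset β => Nonempty (H ≃g (G.induce (S : Set β)))] :
    inducedCount H G =
      (Finset.univ.filter fun S : Finset β => Nonempty (H ≃g (G.induce (S : Set β)))).card := by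
  rw [inducedCount, ← Set.ncard_coe_finset]
  congr 1
  ext S
  simp

/-- Iso between the double induce and single induce. -/
def mapDown {V : Type*} (G : SimpleGraph V) (X : Set V) (T : Finset X) :
    ((G.induce X).induce (T : Set X)) ≃g
      G.induce ((T.map (Function.Embedding.subtype _) : Finset V) : Set V) where
  toFun := fun u => ⟨u.1.1, by
    simp only [Finset.coe_map, Set.mem_image, Finset.mem_coe]
    exact ⟨u.1, u.2, rfl⟩⟩
  invFun := fun v => by
    refine ⟨⟨v.1, ?_⟩, ?_⟩
    · have := v.2
      simp only [Finset.coe_map, Set.mem_image, Finset.mem_coe] at this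
      obtain ⟨t, ht, heq⟩ := this
      exact heq ▸ t.2
    · have := v.2
      simp only [Finset.coe_map, Set.mem_image, Finset.mem_coe] at this
      obtain ⟨t, ht, heq⟩ := this
      simp only [Finset.mem_coe]
      convert ht using 1
      exact Subtype.ext heq.symm
  left_inv := fun u => by ext; rfl
  right_inv := fun v => by ext; rfl
  map_rel_iff' := Iff.rfl

/-- A transversal induces a net. -/
def transversalCopy {V : Type*} [DecidableEq V] (G : SimpleGraph V) (φ : V → Fin 6) (hφ : IsNetBlowup G φ)
    (s : Fin 6 → V) (hs : ∀ i, φ (s i) = i) :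
    netGraph ≃g G.induce ((Finset.univ.image s : Finset V) : Set V) where
  toFun := fun a => ⟨s a, by simp⟩
  invFun := fun v => φ v.1
  left_inv := fun a => hs a
  right_inv := fun v => by
    have := v.2
    simp only [Finset.coe_image, Set.mem_image, Finset.mem_coe, Finset.coe_univ,
      Set.image_univ, Set.mem_range] at this
    obtain ⟨a, ha⟩ := this
    ext
    simp only
    rw [← ha, hs a]
  map_rel_iff' := by
    intro a b
    simp only [Equiv.coe_fn_mk, comap_adj, Function.Embedding.coe_subtype]
    by_cases hab : a = b
    · subst hab
      simp
    · rw [hφ (s a) (s b) (by rw [hs, hs]; exact hab), hs, hs]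

instance : DecidableRel netGraph.Adj := fun a b =>
  decidable_of_iff' _ (SimpleGraph.fromRel_adj _ a b)

lemma net_no_module : ∀ T : Finset (Fin 6),
    (∀ a ∈ T, ∀ b ∈ T, ∀ c ∉ T, (netGraph.Adj c a ↔ netGraph.Adj c b)) →
    T.card ≤ 1 ∨ T = Finset.univ := by decide

lemma copies_classified {V : Type*} (G : SimpleGraph V) (φ : V → Fin 6)
    (hφ : IsNetBlowup G φ) (S : Finset V)
    (h : Nonempty (netGraph ≃g (G.induce (S : Set V)))) :
    (∀ i : Fin 6, (S.filter (fun v => φ v = i)).card = 1) ∨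
    (∃ i : Fin 6, ∀ v ∈ S, φ v = i) := by
  classical
  obtain ⟨e⟩ := h
  set T : Fin 6 → Finset (Fin 6) :=
    fun i => Finset.univ.filter (fun a => φ (e a).1 = i) with hT
  have hadj : ∀ a b : Fin 6, netGraph.Adj a b ↔ G.Adj (e a).1 (e b).1 := by
    intro a b
    rw [← e.map_adj_iff]
    rfl
  have hmod : ∀ i, (T i).card ≤ 1 ∨ T i = Finset.univ := by
    intro i
    apply net_no_module
    intro a ha b hb c hc
    simp only [hT, Finset.mem_filter, Finset.mem_univ, true_and] at ha hb hc
    rw [hadj c a, hadj c b,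
      hφ _ _ (by rw [ha]; exact hc), hφ _ _ (by rw [hb]; exact hc), ha, hb]
  by_cases huniv : ∃ i, T i = Finset.univ
  · obtain ⟨i, hi⟩ := huniv
    right
    refine ⟨i, fun v hv => ?_⟩
    have : ∀ a : Fin 6, φ (e a).1 = i := by
      intro a
      have : a ∈ T i := hi ▸ Finset.mem_univ a
      simpa [hT] using this
    have hv' : (⟨v, hv⟩ : (S : Set V)) = e (e.symm ⟨v, hv⟩) := (e.apply_symm_apply _).symm
    have := this (e.symm ⟨v, hv⟩)
    rw [← hv'] at this
    exact this
  · left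
    push_neg at huniv
    have hle : ∀ i, (T i).card ≤ 1 := fun i => (hmod i).resolve_right (huniv i)
    have hsum : ∑ i : Fin 6, (T i).card = 6 := by
      rw [hT]
      rw [← Finset.card_eq_sum_card_fiberwise (f := fun a => φ (e a).1)
        (fun x _ => Finset.mem_univ _)]
      simp
    have hone : ∀ i, (T i).card = 1 := by
      by_contra hc
      push_neg at hc
      obtain ⟨j, hj⟩ := hc
      have : ∑ i : Fin 6, (T i).card < ∑ i : Fin 6, 1 :=
        Finset.sum_lt_sum (fun i _ => hle i)
          ⟨j, Finset.mem_univ j, lt_of_le_of_ne (hle j) hj⟩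
      simp [hsum] at this
    intro i
    have himg : S.filter (fun v => φ v = i) = (T i).image (fun a => (e a).1) := by
      ext v
      simp only [Finset.mem_filter, Finset.mem_image, hT, Finset.mem_univ, true_and]
      constructor
      · rintro ⟨hv, hφv⟩
        refine ⟨e.symm ⟨v, hv⟩, ?_, ?_⟩
        · rw [e.apply_symm_apply]; exact hφv
        · rw [e.apply_symm_apply]
      · rintro ⟨a, ha, rfl⟩
        exact ⟨(e a).2, ha⟩
    rw [himg, Finset.card_image_of_injOn, hone]
    intro a _ b _ hab
    exact e.toEquiv.injective (Subtype.ext hab)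

lemma copy_card {V : Type*} (G : SimpleGraph V) (S : Finset V)
    (h : Nonempty (netGraph ≃g (G.induce (S : Set V)))) : S.card = 6 := by
  obtain ⟨e⟩ := h
  have := Nat.card_congr e.toEquiv
  simpa [Nat.card_coe_set_eq, Set.ncard_coe_finset] using this.symm

theorem netBlowup_inducedCount_recurrence
    {V : Type*} [Fintype V] (G : SimpleGraph V) (φ : V → Fin 6)
    (hφ : IsNetBlowup G φ) :
    (∀ S : Finset V, Nonempty (netGraph ≃g (G.induce (S : Set V))) →
      (∀ i : Fin 6, (S.filter (fun v => φ v = i)).card = 1) ∨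
      (∃ i : Fin 6, ∀ v ∈ S, φ v = i)) ∧
    inducedCount netGraph G =
      (∏ i : Fin 6, (Finset.univ.filter (fun v => φ v = i)).card) +
      ∑ i : Fin 6,
        inducedCount netGraph
          (G.induce ((Finset.univ.filter (fun v => φ v = i) : Finset V) : Set V)) := by
  classical
  refine ⟨copies_classified G φ hφ, ?_⟩
  set X : Fin 6 → Finset V := fun i => Finset.univ.filter (fun v => φ v = i) with hX
  set A : Finset (Finset V) :=
    Finset.univ.filter (fun S : Finset V => Nonempty (netGraph ≃g (G.induce (S : Set V)))) with hA
  set At : Finset (Finset V) :=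
    A.filter (fun S => ∀ i : Fin 6, (S.filter (fun v => φ v = i)).card = 1) with hAt
  set AP : Fin 6 → Finset (Finset V) :=
    fun i => A.filter (fun S => ∀ v ∈ S, φ v = i) with hAP
  have hmemA : ∀ S, S ∈ A ↔ Nonempty (netGraph ≃g (G.induce (S : Set V))) := by
    intro S; simp [hA]
  -- cover
  have hcover : A = At ∪ Finset.univ.biUnion AP := by
    apply Finset.Subset.antisymm
    · intro S hS
      rcases copies_classified G φ hφ S ((hmemA S).1 hS) with h1 | ⟨i, hi⟩
      · exact Finset.mem_union_left _ (Finset.mem_filter.2 ⟨hS, h1⟩)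
      · exact Finset.mem_union_right _
          (Finset.mem_biUnion.2 ⟨i, Finset.mem_univ i, Finset.mem_filter.2 ⟨hS, hi⟩⟩)
    · intro S hS
      rcases Finset.mem_union.1 hS with h | h
      · exact (Finset.mem_filter.1 h).1
      · obtain ⟨i, _, hi⟩ := Finset.mem_biUnion.1 h
        exact (Finset.mem_filter.1 hi).1
  have hS6 : ∀ S ∈ A, S.card = 6 := fun S hS => copy_card G S ((hmemA S).1 hS)
  have hdisj : Disjoint At (Finset.univ.biUnion AP) := by
    rw [Finset.disjoint_left]
    intro S hSt hSP
    obtain ⟨i, _, hi⟩ := Finset.mem_biUnion.1 hSP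
    obtain ⟨hSA, hall⟩ := Finset.mem_filter.1 hi
    obtain ⟨_, h1⟩ := Finset.mem_filter.1 hSt
    obtain ⟨j, hj⟩ : ∃ j : Fin 6, j ≠ i := ⟨i + 1, by omega⟩
    have : (S.filter (fun v => φ v = j)) = ∅ := by
      rw [Finset.filter_eq_empty_iff]
      intro v hv
      rw [hall v hv]
      exact fun h => hj h.symm
    have hj1 := h1 j
    rw [this] at hj1
    simp at hj1
  have hPdisj : ∀ i ∈ (Finset.univ : Finset (Fin 6)), ∀ j ∈ (Finset.univ : Finset (Fin 6)),
      i ≠ j → Disjoint (AP i) (AP j) := by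
    intro i _ j _ hij
    rw [Finset.disjoint_left]
    intro S hSi hSj
    obtain ⟨hSA, hi⟩ := Finset.mem_filter.1 hSi
    obtain ⟨_, hj⟩ := Finset.mem_filter.1 hSj
    have : S.Nonempty := Finset.card_pos.1 (by rw [hS6 S hSA]; norm_num)
    obtain ⟨v, hv⟩ := this
    exact hij ((hi v hv).symm.trans (hj v hv))
  have hcard : A.card = At.card + ∑ i : Fin 6, (AP i).card := by
    rw [hcover, Finset.card_union_of_disjoint hdisj, Finset.card_biUnion hPdisj]
  -- transversal count
  have hXmem : ∀ i (v : V), v ∈ X i ↔ φ v = i := by intro i v; simp [hX]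
  have ht : At.card = ∏ i : Fin 6, (X i).card := by
    set Φ : (∀ i : Fin 6, {v // v ∈ X i}) → Finset V :=
      fun s => Finset.univ.image (fun i => (s i).1) with hΦ
    have hsφ : ∀ (s : ∀ i : Fin 6, {v // v ∈ X i}) (i : Fin 6), φ (s i).1 = i :=
      fun s i => (hXmem i _).1 (s i).2
    have hΦinj : Function.Injective Φ := by
      intro s s' hss
      funext i
      have h1 : (s i).1 ∈ Φ s' := hss ▸ (Finset.mem_image.2 ⟨i, Finset.mem_univ i, rfl⟩)
      obtain ⟨j, _, hj⟩ := Finset.mem_image.1 h1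
      have : j = i := by rw [← hsφ s' j, hj, hsφ s i]
      exact Subtype.ext (by rw [← hj, this])
    have hAtimg : At = Finset.univ.image Φ := by
      apply Finset.Subset.antisymm
      · intro S hS
        obtain ⟨hSA, h1⟩ := Finset.mem_filter.1 hS
        choose f hf using fun i => Finset.card_eq_one.1 (h1 i)
        have hfS : ∀ i, f i ∈ S ∧ φ (f i) = i := by
          intro i
          have : f i ∈ S.filter (fun v => φ v = i) := by rw [hf i]; exact Finset.mem_singleton_self _
          simpa using this
        refine Finset.mem_image.2 ⟨fun i => ⟨f i, (hXmem i _).2 (hfS i).2⟩, Finset.mem_univ _, ?_⟩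
        apply Finset.Subset.antisymm
        · intro v hv
          obtain ⟨i, _, hi⟩ := Finset.mem_image.1 hv
          rw [← hi]
          exact (hfS i).1
        · intro v hv
          have : v ∈ S.filter (fun w => φ w = φ v) := Finset.mem_filter.2 ⟨hv, rfl⟩
          rw [hf (φ v), Finset.mem_singleton] at this
          exact Finset.mem_image.2 ⟨φ v, Finset.mem_univ _, this.symm⟩
      · intro S hS
        obtain ⟨s, _, rfl⟩ := Finset.mem_image.1 hS
        have hcopy : Nonempty (netGraph ≃g (G.induce ((Φ s : Finset V) : Set V))) :=
          ⟨transversalCopy G φ hφ (fun i => (s i).1) (hsφ s)⟩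
        refine Finset.mem_filter.2 ⟨(hmemA _).2 hcopy, fun i => ?_⟩
        have : (Φ s).filter (fun v => φ v = i) = {(s i).1} := by
          ext v
          simp only [Finset.mem_filter, Finset.mem_singleton, hΦ, Finset.mem_image,
            Finset.mem_univ, true_and]
          constructor
          · rintro ⟨⟨j, hj⟩, hφv⟩
            rw [← hj] at hφv ⊢
            rw [hsφ s j] at hφv
            rw [hφv]
          · rintro rfl
            exact ⟨⟨i, rfl⟩, hsφ s i⟩
        rw [this, Finset.card_singleton]
    rw [hAtimg, Finset.card_image_of_injective _ hΦinj, Finset.card_univ, Fintype.card_pi]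
    simp
  -- per-part count
  have hi : ∀ i : Fin 6, (AP i).card =
      inducedCount netGraph (G.induce ((X i : Finset V) : Set V)) := by
    intro i
    rw [inducedCount_eq_card]
    set B : Finset (Finset ((X i : Finset V) : Set V)) :=
      Finset.univ.filter (fun T => Nonempty
        (netGraph ≃g ((G.induce ((X i : Finset V) : Set V)).induce (T : Set _)))) with hB
    have hminj : Function.Injective
        (fun T : Finset (((X i : Finset V) : Set V)) => T.map (Function.Embedding.subtype _)) :=
      fun T T' h => Finset.map_injective _ h
    have himg : AP i =
        B.image (fun T => T.map (Function.Embedding.subtype _)) := by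
      apply Finset.Subset.antisymm
      · intro S hS
        obtain ⟨hSA, hall⟩ := Finset.mem_filter.1 hS
        have hsub : ∀ v ∈ S, v ∈ ((X i : Finset V) : Set V) := by
          intro v hv
          simp only [Finset.mem_coe]
          exact (hXmem i v).2 (hall v hv)
        have hmT : (S.subtype (fun v => v ∈ ((X i : Finset V) : Set V))).map
            (Function.Embedding.subtype _) = S := by
          rw [Finset.subtype_map, Finset.filter_true_of_mem hsub]
        refine Finset.mem_image.2 ⟨S.subtype (fun v => v ∈ ((X i : Finset V) : Set V)), ?_, hmT⟩
        rw [hB, Finset.mem_filter]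
        refine ⟨Finset.mem_univ _, ?_⟩
        obtain ⟨e⟩ := (hmemA S).1 hSA
        have e2 := mapDown G ((X i : Finset V) : Set V)
          (S.subtype (fun v => v ∈ ((X i : Finset V) : Set V)))
        rw [hmT] at e2
        exact ⟨e.trans e2.symm⟩
      · intro S hS
        obtain ⟨T, hT, rfl⟩ := Finset.mem_image.1 hS
        obtain ⟨e⟩ := (Finset.mem_filter.1 hT).2
        refine Finset.mem_filter.2 ⟨(hmemA _).2 ⟨e.trans (mapDown G _ T)⟩, ?_⟩
        intro v hv
        simp only [Finset.mem_map] at hv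
        obtain ⟨t, _, rfl⟩ := hv
        exact (hXmem i _).1 t.2
    rw [himg, Finset.card_image_of_injective _ hminj]
  -- assemble
  rw [inducedCount_eq_card, ← hA, hcard, ht]
  congr 1
  exact Finset.sum_congr rfl (fun i _ => hi i)
end

section
/- For every graph H on k vertices and every integer n > k, (n − k)·I(H,n) ≤ n·I(H, n−1); equivalently, I(H,n)/C(n,k) ≤ I(H,n−1)/C(n−1,k), so the sequence n ↦ I(H,n)/C(n,k) is nonincreasing for n ≥ k. -/
open SimpleGraph

/-- An embedding of graphs restricts to an iso between induced subgraphs on a set and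
its image. -/
noncomputable def embInduceIso {γ δ : Type*} {G1 : SimpleGraph γ} {G2 : SimpleGraph δ}
    (f : G1 ↪g G2) (s : Set γ) : G1.induce s ≃g G2.induce (⇑f '' s) where
  toEquiv := Equiv.Set.image (⇑f) s f.injective
  map_rel_iff' := by
    intro a b
    simp [Equiv.Set.image, Equiv.Set.imageOfInjOn, comap_adj, f.map_adj_iff]

lemma copy_transfer {α γ δ : Type*} [Fintype α] (H : SimpleGraph α)
    {G1 : SimpleGraph γ} {G2 : SimpleGraph δ} (f : G1 ↪g G2) {s : Set γ} {t : Set δ}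
    (hst : ⇑f '' s = t) (h : Nonempty (H ≃g G1.induce s)) :
    Nonempty (H ≃g G2.induce t) := by
  subst hst
  exact ⟨h.some.trans (embInduceIso f s)⟩

lemma inducedCount_le_of_iso {α γ δ : Type*} [Fintype α] [Fintype γ] [Fintype δ]
    (H : SimpleGraph α) {G1 : SimpleGraph γ} {G2 : SimpleGraph δ} (φ : G1 ≃g G2) :
    inducedCount H G1 ≤ inducedCount H G2 := by
  have hinj : Function.Injective (fun S : Finset γ => S.map φ.toEquiv.toEmbedding) :=
    fun S T h => Finset.map_injective _ h
  rw [inducedCount, inducedCount, ← Set.ncard_image_of_injective _ hinj]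
  apply Set.ncard_le_ncard _ (Set.toFinite _)
  rintro T ⟨S, hS, rfl⟩
  refine copy_transfer H φ.toEmbedding ?_ hS
  simp

lemma inducedCount_eq_of_iso {α γ δ : Type*} [Fintype α] [Fintype γ] [Fintype δ]
    (H : SimpleGraph α) {G1 : SimpleGraph γ} {G2 : SimpleGraph δ} (φ : G1 ≃g G2) :
    inducedCount H G1 = inducedCount H G2 :=
  le_antisymm (inducedCount_le_of_iso H φ) (inducedCount_le_of_iso H φ.symm)

lemma bddAbove_maxCount_set {α : Type*} [Fintype α] (H : SimpleGraph α) (n : ℕ) :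
    BddAbove {m | ∃ G : SimpleGraph (Fin n), inducedCount H G = m} :=
  Set.Finite.bddAbove (Set.finite_range fun G : SimpleGraph (Fin n) => inducedCount H G)

lemma le_maxCount {α : Type*} [Fintype α] (H : SimpleGraph α) {n : ℕ}
    (G : SimpleGraph (Fin n)) : inducedCount H G ≤ maxCount H n :=
  le_csSup (bddAbove_maxCount_set H n) ⟨G, rfl⟩

lemma exists_maxCount {α : Type*} [Fintype α] (H : SimpleGraph α) (n : ℕ) :
    ∃ G : SimpleGraph (Fin n), inducedCount H G = maxCount H n := by
  have : maxCount H n ∈ {m | ∃ G : SimpleGraph (Fin n), inducedCount H G = m} :=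
    Nat.sSup_mem ⟨inducedCount H (⊥ : SimpleGraph (Fin n)), ⊥, rfl⟩ (bddAbove_maxCount_set H n)
  exact this

lemma inducedCount_le_maxCount_card {α γ : Type*} [Fintype α] [Fintype γ] [DecidableEq γ]
    (H : SimpleGraph α) (G : SimpleGraph γ) :
    inducedCount H G ≤ maxCount H (Fintype.card γ) := by
  rw [inducedCount_eq_of_iso H (SimpleGraph.Iso.map (Fintype.equivFin γ) G)]
  exact le_maxCount H _

lemma copy_transfer' {α γ δ : Type*} [Fintype α] (H : SimpleGraph α)
    {G1 : SimpleGraph γ} {G2 : SimpleGraph δ} (f : G1 ↪g G2) {s : Set γ} {t : Set δ}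
    (hst : ⇑f '' s = t) (h : Nonempty (H ≃g G2.induce t)) :
    Nonempty (H ≃g G1.induce s) := by
  subst hst
  exact ⟨h.some.trans (embInduceIso f s).symm⟩

lemma key_count (k n : ℕ) (H : SimpleGraph (Fin k)) (G : SimpleGraph (Fin n)) :
    (n - k) * inducedCount H G ≤ n * maxCount H (n - 1) := by
  classical
  set p : Finset (Fin n) → Prop := fun S => Nonempty (H ≃g G.induce (S : Set (Fin n))) with hp
  set 𝒞 : Finset (Finset (Fin n)) := Finset.univ.filter p with hC
  have hcount : inducedCount H G = 𝒞.card := by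
    rw [inducedCount, ← Set.ncard_coe_finset]
    congr 1
    ext S; simp [hC, hp]
  have hcard : ∀ S ∈ 𝒞, S.card = k := by
    intro S hS
    obtain ⟨ψ⟩ : p S := (Finset.mem_filter.mp hS).2
    have h2 := Nat.card_congr ψ.toEquiv
    simpa [Nat.card_eq_fintype_card, Nat.card_coe_set_eq, Set.ncard_coe_finset] using h2.symm
  have hdc : ∑ v : Fin n, (𝒞.filter (fun S => v ∉ S)).card = (n - k) * 𝒞.card := by
    calc ∑ v : Fin n, (𝒞.filter (fun S => v ∉ S)).card
        = ∑ v : Fin n, ∑ S ∈ 𝒞, if v ∉ S then 1 else 0 := by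
          simp [Finset.card_filter]
      _ = ∑ S ∈ 𝒞, ∑ v : Fin n, if v ∉ S then 1 else 0 := Finset.sum_comm
      _ = ∑ S ∈ 𝒞, (n - k) := by
          refine Finset.sum_congr rfl fun S hS => ?_
          rw [← Finset.card_filter]
          have he : Finset.univ.filter (fun v => v ∉ S) = Sᶜ := by ext; simp
          rw [he, Finset.card_compl, hcard S hS, Fintype.card_fin]
      _ = (n - k) * 𝒞.card := by rw [Finset.sum_const, smul_eq_mul, mul_comm]
  have hv : ∀ v : Fin n, (𝒞.filter (fun S => v ∉ S)).card ≤ maxCount H (n - 1) := by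
    intro v
    set A : Set (Fin n) := {v}ᶜ with hA
    have hcardA : Fintype.card ↥A = n - 1 := by
      show Fintype.card ↥({v}ᶜ : Set (Fin n)) = n - 1
      rw [Fintype.card_compl_set, Set.card_singleton, Fintype.card_fin]
    set g : Finset ↥A → Finset (Fin n) := fun T => T.map (Function.Embedding.subtype _) with hg
    have hginj : Function.Injective g := fun T T' h => Finset.map_injective _ h
    have himg : g '' {T : Finset ↥A | Nonempty (H ≃g (G.induce A).induce (T : Set ↥A))}
        = {S : Finset (Fin n) | p S ∧ v ∉ S} := by
      ext S
      constructor
      · rintro ⟨T, hT, rfl⟩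
        constructor
        · refine copy_transfer H (SimpleGraph.Embedding.induce A) ?_ hT
          simp [hg]
          rfl
        · intro hmem
          have hprop := Finset.property_of_mem_map_subtype T hmem
          simp [hA] at hprop
      · rintro ⟨hS, hvS⟩
        have hsub : ∀ x ∈ S, x ∈ A := by
          intro x hx
          simp only [hA, Set.mem_compl_iff, Set.mem_singleton_iff]
          rintro rfl; exact hvS hx
        have hgT : g (S.subtype (· ∈ A)) = S := by
          rw [hg]
          simpa [Finset.subtype_map] using Finset.filter_eq_self.mpr hsub
        refine ⟨S.subtype (· ∈ A), ?_, hgT⟩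
        refine copy_transfer' H (SimpleGraph.Embedding.induce A) ?_ hS
        ext x
        constructor
        · rintro ⟨a, haT, rfl⟩
          exact Finset.mem_subtype.mp haT
        · intro hx
          exact ⟨⟨x, hsub x hx⟩, Finset.mem_subtype.mpr hx, rfl⟩
    have hkey : (𝒞.filter (fun S => v ∉ S)).card = inducedCount H (G.induce A) := by
      rw [← Set.ncard_coe_finset, inducedCount, ← Set.ncard_image_of_injective _ hginj, himg]
      congr 1
      ext S
      simp [hC, hp]
    rw [hkey]
    calc inducedCount H (G.induce A) ≤ maxCount H (Fintype.card ↥A) :=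
          inducedCount_le_maxCount_card H _
      _ = maxCount H (n - 1) := by rw [hcardA]
  calc (n - k) * inducedCount H G = ∑ v : Fin n, (𝒞.filter (fun S => v ∉ S)).card := by
        rw [hcount, hdc]
    _ ≤ ∑ _v : Fin n, maxCount H (n - 1) := Finset.sum_le_sum fun v _ => hv v
    _ = n * maxCount H (n - 1) := by simp [mul_comm]

lemma choose_identity (k n : ℕ) (hn : k < n) :
    n * (n - 1).choose k = n.choose k * (n - k) := by
  obtain ⟨m, rfl⟩ : ∃ m, n = m + 1 := ⟨n - 1, by omega⟩
  simpa using (Nat.add_one_mul_choose_eq m k).trans (Nat.choose_succ_right_eq (m + 1) k)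

theorem maxCount_density_monotone
    (k : ℕ) (H : SimpleGraph (Fin k)) (n : ℕ) (hn : k < n) :
    (n - k) * maxCount H n ≤ n * maxCount H (n - 1) ∧
    (maxCount H n : ℝ) / (n.choose k : ℝ) ≤
      (maxCount H (n - 1) : ℝ) / ((n - 1).choose k : ℝ) := by
  obtain ⟨G, hG⟩ := exists_maxCount H n
  have h1 : (n - k) * maxCount H n ≤ n * maxCount H (n - 1) := by
    rw [← hG]; exact key_count k n H G
  refine ⟨h1, ?_⟩
  have hk1 : k ≤ n - 1 := by omega
  have hc1 : 0 < n.choose k := Nat.choose_pos (by omega)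
  have hc2 : 0 < (n - 1).choose k := Nat.choose_pos hk1
  have hnat : maxCount H n * (n - 1).choose k ≤ maxCount H (n - 1) * n.choose k := by
    have hpos : 0 < n - k := by omega
    refine Nat.le_of_mul_le_mul_left ?_ hpos
    calc (n - k) * (maxCount H n * (n - 1).choose k)
        = ((n - k) * maxCount H n) * (n - 1).choose k := by ring
      _ ≤ (n * maxCount H (n - 1)) * (n - 1).choose k := by
          exact Nat.mul_le_mul_right _ h1
      _ = maxCount H (n - 1) * (n * (n - 1).choose k) := by ring
      _ = maxCount H (n - 1) * (n.choose k * (n - k)) := by rw [choose_identity k n hn]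
      _ = (n - k) * (maxCount H (n - 1) * n.choose k) := by ring
  rw [div_le_div_iff₀ (by exact_mod_cast hc1) (by exact_mod_cast hc2)]
  exact_mod_cast hnat
end
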